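/- There are formulas φ and ψ in the language of set theory with two and three free variables respectively such that: φ defines a function from the class of all TCIs into the universe; ψ defines a function from the class {(𝔗, M) : 𝔗 a TCI and M ⊨* 𝔗} into the universe; φ and ψ are absolute for transitive models of ZFC; for each TCI 𝔗 the relation R_𝔗 := {(M, x) : ψ(𝔗, M, x)} is one-one; and for all 𝔗, M, x, ψ(𝔗, M, x) implies there is 𝓛 with φ(𝔗, 𝓛) and x ⊆ 𝓛. -/

import Mathlib

/-!
Common formalization layer for "Small extensions of set-theoretic universes".

We work with `ZFSet`, Mathlib's type of ZFC sets.  A "universe" `V` is a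
`ZFSet` which is a (countable) transitive model of ZFC, where satisfaction
of ZFC is spelled out via an explicit first-order syntax `Fm` for languages
whose symbols are named by ZFC sets, together with a Tarskian satisfaction
predicate `Sat`.  TCIs (theories with constraints in interpretation), their
models, the forcings `ℙ(𝔗)`, derivative forcings, generic filters, the
evaluation map `Eval^V`, local method definitions and the reducibility
relation `≤^M` are all defined below, following the paper.
-/

noncomputable section

namespace SmallExt

open Classical

attribute [local instance] Classical.propDecidable

instance : Nonempty ZFSet := ⟨∅⟩

/-! ### basic coding machinery -/

/-- Kuratowski ordered pair. -/
def opair (a b : ZFSet) : ZFSet := ZFSet.pair a b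

/-- First projection of a Kuratowski pair. -/
def zfst (x : ZFSet) : ZFSet := ZFSet.sUnion (ZFSet.sInter x)

/-- Second projection of a Kuratowski pair. -/
def zsnd (x : ZFSet) : ZFSet :=
  ZFSet.sUnion
    (ZFSet.sep (fun y => ZFSet.sUnion x ≠ ZFSet.sInter x → y ∉ ZFSet.sInter x) (ZFSet.sUnion x))

/-- The `n`-th von Neumann natural, as a ZFC set. -/
def natZ : ℕ → ZFSet
  | 0 => ∅
  | n + 1 => insert (natZ n) (natZ n)

/-- Internal coding of a finite list as an iterated pair (`[a] ↦ a`), so that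
`ztuple` of a list of length `n` is a member of the `n`-th cartesian power. -/
def ztuple : List ZFSet → ZFSet
  | [] => ∅
  | [a] => a
  | a :: b :: l => opair a (ztuple (b :: l))

/-- Internal coding of a finite list as an iterated pair, with end marker `∅`. -/
def zlist : List ZFSet → ZFSet
  | [] => ∅
  | a :: l => opair a (zlist l)

/-- `n`-th cartesian power of a ZFC set (with `z^1 = z`, as in the paper). -/
def ZPow (z : ZFSet) : ℕ → ZFSet
  | 0 => {∅}
  | 1 => z
  | n + 2 => ZFSet.prod z (ZPow z (n + 1))

/-- Decode an internal `n`-tuple into a list. -/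
def decodeTuple : ℕ → ZFSet → List ZFSet
  | 0, _ => []
  | 1, t => [t]
  | n + 2, t => zfst t :: decodeTuple (n + 1) (zsnd t)

/-- Image of a ZFC set under an arbitrary (classically definable) function. -/
def zimage (f : ZFSet → ZFSet) (x : ZFSet) : ZFSet :=
  @ZFSet.image f (Classical.allZFSetDefinable _) x

/-- The set of finite subsets of a ZFC set. -/
def finSubsets (A : ZFSet) : ZFSet :=
  ZFSet.sep (fun p => p.toSet.Finite) (ZFSet.powerset A)

/-- Application of a set-coded function (a set of ordered pairs) to an argument. -/
def iapp (I s : ZFSet) : ZFSet := Classical.epsilon fun v => opair s v ∈ I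

/-- `f` is a set-coded function with domain `d`. -/
def IsZFunc (f d : ZFSet) : Prop :=
  (∀ q ∈ f, ∃ s v, q = opair s v ∧ s ∈ d) ∧ ∀ s ∈ d, ∃! v, opair s v ∈ f

/-- `j` is (the code of) an injective function from `a` into `b`. -/
def ZInjFun (j a b : ZFSet) : Prop :=
  IsZFunc j a ∧ (∀ s ∈ a, iapp j s ∈ b) ∧
    ∀ s ∈ a, ∀ s' ∈ a, iapp j s = iapp j s' → s = s'

/-- Von Neumann ordinals: transitive sets of transitive sets. -/
def IsOrd (x : ZFSet) : Prop := x.IsTransitive ∧ ∀ y ∈ x, ZFSet.IsTransitive y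

/-- `t` is the transitive closure of `a`. -/
def IsTrclOf (a t : ZFSet) : Prop :=
  a ⊆ t ∧ t.IsTransitive ∧ ∀ u, a ⊆ u → u.IsTransitive → t ⊆ u

/-! ### first-order syntax over set-named signatures -/

/-- Terms: de Bruijn variables, set parameters, and applications of
function symbols (named by ZFC sets; constants are `0`-ary functions). -/
inductive Tm : Type 1
  | var : ℕ → Tm
  | param : ZFSet.{0} → Tm
  | func : ZFSet.{0} → (n : ℕ) → (Fin n → Tm) → Tm

/-- First-order formulas over set-named signatures (with equality). -/
inductive Fm : Type 1
  | rel : ZFSet.{0} → (n : ℕ) → (Fin n → Tm) → Fm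
  | eq : Tm → Tm → Fm
  | not : Fm → Fm
  | imp : Fm → Fm → Fm
  | all : Fm → Fm
  | ex : Fm → Fm

/-- Derived conjunction. -/
def Fm.and (f g : Fm) : Fm := Fm.not (Fm.imp f (Fm.not g))

/-- Derived disjunction. -/
def Fm.or (f g : Fm) : Fm := Fm.imp (Fm.not f) g

/-- Derived biconditional. -/
def Fm.iff (f g : Fm) : Fm := Fm.and (Fm.imp f g) (Fm.imp g f)

/-- Evaluation of terms. -/
def Tm.eval (fI : ZFSet → List ZFSet → ZFSet) (v : ℕ → ZFSet) : Tm → ZFSet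
  | Tm.var n => v n
  | Tm.param a => a
  | Tm.func s n a => fI s (List.ofFn fun i => Tm.eval fI v (a i))

/-- Prepend a value to a valuation (for quantifiers). -/
def vcons (z : ZFSet) (v : ℕ → ZFSet) : ℕ → ZFSet
  | 0 => z
  | n + 1 => v n

/-- Tarskian satisfaction, parametrized by a class domain `domP`, an
interpretation `rI` of the relation symbols and `fI` of the function symbols. -/
def Sat (domP : ZFSet → Prop) (rI : ZFSet → List ZFSet → Prop)
    (fI : ZFSet → List ZFSet → ZFSet) : Fm → (ℕ → ZFSet) → Prop
  | Fm.rel s n a, v => rI s (List.ofFn fun i => Tm.eval fI v (a i))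
  | Fm.eq t u, v => Tm.eval fI v t = Tm.eval fI v u
  | Fm.not f, v => ¬ Sat domP rI fI f v
  | Fm.imp f g, v => Sat domP rI fI f v → Sat domP rI fI g v
  | Fm.all f, v => ∀ z, domP z → Sat domP rI fI f (vcons z v)
  | Fm.ex f, v => ∃ z, domP z ∧ Sat domP rI fI f (vcons z v)

/-- Free variables of a term. -/
def Tm.free : Tm → Set ℕ
  | Tm.var n => {n}
  | Tm.param _ => ∅
  | Tm.func _ _ a => {m | ∃ i, m ∈ Tm.free (a i)}

/-- Free variables of a formula (de Bruijn). -/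
def Fm.free : Fm → Set ℕ
  | Fm.rel _ _ a => {m | ∃ i, m ∈ Tm.free (a i)}
  | Fm.eq t u => Tm.free t ∪ Tm.free u
  | Fm.not f => Fm.free f
  | Fm.imp f g => Fm.free f ∪ Fm.free g
  | Fm.all f => {m | m + 1 ∈ Fm.free f}
  | Fm.ex f => {m | m + 1 ∈ Fm.free f}

/-- Set parameters occurring in a term. -/
def Tm.paramSet : Tm → Set ZFSet
  | Tm.var _ => ∅
  | Tm.param a => {a}
  | Tm.func _ _ a => {b | ∃ i, b ∈ Tm.paramSet (a i)}

/-- Set parameters occurring in a formula. -/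
def Fm.paramSet : Fm → Set ZFSet
  | Fm.rel _ _ a => {b | ∃ i, b ∈ Tm.paramSet (a i)}
  | Fm.eq t u => Tm.paramSet t ∪ Tm.paramSet u
  | Fm.not f => Fm.paramSet f
  | Fm.imp f g => Fm.paramSet f ∪ Fm.paramSet g
  | Fm.all f => Fm.paramSet f
  | Fm.ex f => Fm.paramSet f

/-- Quantifier-free formulas. -/
def IsQF : Fm → Prop
  | Fm.rel _ _ _ => True
  | Fm.eq _ _ => True
  | Fm.not f => IsQF f
  | Fm.imp f g => IsQF f ∧ IsQF g
  | Fm.all _ => False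
  | Fm.ex _ => False

mutual
  /-- `Π_n` formulas (prenex, with possibly empty quantifier blocks). -/
  inductive IsPi : ℕ → Fm → Prop where
    | qf {f} : IsQF f → IsPi 0 f
    | ofSigma {n f} : IsSigma n f → IsPi (n + 1) f
    | all {n f} : IsPi (n + 1) f → IsPi (n + 1) (Fm.all f)

  /-- `Σ_n` formulas (prenex, with possibly empty quantifier blocks). -/
  inductive IsSigma : ℕ → Fm → Prop where
    | qf {f} : IsQF f → IsSigma 0 f
    | ofPi {n f} : IsPi n f → IsSigma (n + 1) f
    | ex {n f} : IsSigma (n + 1) f → IsSigma (n + 1) (Fm.ex f)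
end

/-! ### the language of set theory and ZFC -/

/-- The name of the membership relation symbol. -/
def memSym : ZFSet := natZ 0

/-- The standard interpretation of `∈`. -/
def memRel : ZFSet → List ZFSet → Prop :=
  fun s args => s = memSym ∧ ∃ a b, args = [a, b] ∧ a ∈ b

/-- Satisfaction in the ∈-structure with domain `M` (a ZFC set). -/
def SatV (M : ZFSet) (f : Fm) (v : ℕ → ZFSet) : Prop :=
  Sat (· ∈ M) memRel (fun _ _ => ∅) f v

/-- Satisfaction in the ambient (class-sized) ∈-structure. -/
def SatU (f : Fm) (v : ℕ → ZFSet) : Prop :=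
  Sat (fun _ => True) memRel (fun _ _ => ∅) f v

/-- Atomic membership formula between de Bruijn variables. -/
def mem2 (i j : ℕ) : Fm := Fm.rel memSym 2 ![Tm.var i, Tm.var j]

/-- Equality between de Bruijn variables. -/
def eq2 (i j : ℕ) : Fm := Fm.eq (Tm.var i) (Tm.var j)

/-- Terms that are plain variables or parameters. -/
def Tm.noFunc : Tm → Prop
  | Tm.var _ => True
  | Tm.param _ => True
  | Tm.func _ _ _ => False

/-- Formulas of the language of set theory (only `∈`, binary, no function
symbols; parameters allowed). -/
def Fm.memOnly : Fm → Prop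
  | Fm.rel s n a => s = memSym ∧ n = 2 ∧ ∀ i, Tm.noFunc (a i)
  | Fm.eq t u => Tm.noFunc t ∧ Tm.noFunc u
  | Fm.not f => Fm.memOnly f
  | Fm.imp f g => Fm.memOnly f ∧ Fm.memOnly g
  | Fm.all f => Fm.memOnly f
  | Fm.ex f => Fm.memOnly f

/-- Iterated universal closure. -/
def allClose : ℕ → Fm → Fm
  | 0, f => f
  | k + 1, f => allClose k (Fm.all f)

/-- Extensionality. -/
def extAx : Fm :=
  Fm.all (Fm.all (Fm.imp (Fm.all (Fm.iff (mem2 0 2) (mem2 0 1))) (eq2 1 0)))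

/-- Pairing. -/
def pairAx : Fm := Fm.all (Fm.all (Fm.ex (Fm.and (mem2 2 0) (mem2 1 0))))

/-- Union. -/
def unionAx : Fm :=
  Fm.all (Fm.ex (Fm.all (Fm.all (Fm.imp (Fm.and (mem2 1 0) (mem2 0 3)) (mem2 1 2)))))

/-- Power set. -/
def powAx : Fm :=
  Fm.all (Fm.ex (Fm.all (Fm.imp (Fm.all (Fm.imp (mem2 0 1) (mem2 0 3))) (mem2 0 1))))

/-- Infinity. -/
def infAx : Fm :=
  Fm.ex (Fm.and
    (Fm.ex (Fm.and (mem2 0 1) (Fm.all (Fm.not (mem2 0 1)))))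
    (Fm.all (Fm.imp (mem2 0 1)
      (Fm.ex (Fm.and (mem2 0 2) (Fm.and (mem2 1 0)
        (Fm.all (Fm.iff (mem2 0 1) (Fm.or (mem2 0 2) (eq2 0 2))))))))))

/-- Foundation. -/
def fundAx : Fm :=
  Fm.all (Fm.imp (Fm.ex (mem2 0 1))
    (Fm.ex (Fm.and (mem2 0 1) (Fm.all (Fm.imp (mem2 0 1) (Fm.not (mem2 0 2)))))))

/-- Choice (for families of nonempty pairwise disjoint sets). -/
def choiceAx : Fm :=
  Fm.all (Fm.imp
    (Fm.and
      (Fm.all (Fm.imp (mem2 0 1) (Fm.ex (mem2 0 1))))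
      (Fm.all (Fm.all (Fm.imp
        (Fm.and (mem2 1 2) (Fm.and (mem2 0 2) (Fm.ex (Fm.and (mem2 0 2) (mem2 0 1)))))
        (eq2 1 0)))))
    (Fm.ex (Fm.all (Fm.imp (mem2 0 2)
      (Fm.ex (Fm.and (mem2 0 1) (Fm.and (mem2 0 2)
        (Fm.all (Fm.imp (Fm.and (mem2 0 2) (mem2 0 3)) (eq2 0 1))))))))))

/-- Body of a separation instance: `∀x ∃s ∀z (z ∈ s ↔ z ∈ x ∧ φ)`,
where in `φ` the variable `0` is `z`, `2` is `x`, and `≥ 3` are parameters. -/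
def sepBody (φ : Fm) : Fm :=
  Fm.all (Fm.ex (Fm.all (Fm.iff (mem2 0 1) (Fm.and (mem2 0 2) φ))))

/-- Body of a collection instance: `∀a ∃b ∀x∈a (∃y φ → ∃y∈b φ)`,
where in `φ` the variable `0` is `y`, `1` is `x`, `3` is `a`, and `≥ 4` are parameters. -/
def repBody (φ : Fm) : Fm :=
  Fm.all (Fm.ex (Fm.all (Fm.imp (mem2 0 2)
    (Fm.imp (Fm.ex φ) (Fm.ex (Fm.and (mem2 0 2) φ))))))

/-- The ZFC axioms, as a set of sentences of the language of set theory. -/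
def ZFCax : Set Fm :=
  {extAx, pairAx, unionAx, powAx, infAx, fundAx, choiceAx} ∪
    {f | ∃ k φ, Fm.memOnly φ ∧ Fm.paramSet φ = ∅ ∧ 1 ∉ Fm.free φ ∧ f = allClose k (sepBody φ)} ∪
    {f | ∃ k φ, Fm.memOnly φ ∧ Fm.paramSet φ = ∅ ∧ 2 ∉ Fm.free φ ∧ f = allClose k (repBody φ)}

/-- `M` is an ∈-model of ZFC. -/
def SatZFC (M : ZFSet) : Prop := ∀ f ∈ ZFCax, SatV M f (fun _ => ∅)

/-- A transitive model of ZFC. -/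
def IsTransModel (M : ZFSet) : Prop := M.IsTransitive ∧ SatZFC M

/-- A countable transitive model of ZFC. -/
def IsCTM (M : ZFSet) : Prop := IsTransModel M ∧ M.toSet.Countable

/-- `W` is an outer model of `U`: both are CTMs, `U ⊆ W`, and they have
the same ordinals. -/
def OuterModel (U W : ZFSet) : Prop :=
  IsCTM U ∧ IsCTM W ∧ U ⊆ W ∧ ∀ y ∈ W, IsOrd y → y ∈ U

/-- `W = U[m]`: `W` is an outer model of `U` and the smallest CTM
containing `U` as a subset and `m` as an element. -/
def Generates (U m W : ZFSet) : Prop :=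
  OuterModel U W ∧ m ∈ W ∧ ∀ W', IsCTM W' → U ⊆ W' → m ∈ W' → W ⊆ W'

/-- `W` is a small extension of `U`. -/
def IsSmallExt (U W : ZFSet) : Prop :=
  OuterModel U W ∧ ∃ m ∈ W, ∀ W', IsCTM W' → U ⊆ W' → m ∈ W' → W ⊆ W'

/-- `k` is a cardinal from the point of view of the model `U`: an ordinal
with no `U`-internal injection into a smaller ordinal. -/
def IsCardinalIn (U k : ZFSet) : Prop :=
  k ∈ U ∧ IsOrd k ∧ ∀ b ∈ k, ¬ ∃ j ∈ U, ZInjFun j k b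

end SmallExt
namespace SmallExt

attribute [local instance] Classical.propDecidable

/-! ### Theories with constraints in interpretation (TCIs) -/

/-- Coding of terms as ZFC sets. -/
def TmCode : Tm → ZFSet
  | Tm.var n => opair (natZ 0) (natZ n)
  | Tm.param a => opair (natZ 1) a
  | Tm.func s n a => opair (natZ 2) (opair s (zlist (List.ofFn fun i => TmCode (a i))))

/-- Coding of formulas as ZFC sets (the code of `¬ f` is `⟨2, code f⟩`). -/
def FmCode : Fm → ZFSet
  | Fm.rel s n a => opair (natZ 0) (opair s (zlist (List.ofFn fun i => TmCode (a i))))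
  | Fm.eq t u => opair (natZ 1) (opair (TmCode t) (TmCode u))
  | Fm.not f => opair (natZ 2) (FmCode f)
  | Fm.imp f g => opair (natZ 3) (opair (FmCode f) (FmCode g))
  | Fm.all f => opair (natZ 4) (FmCode f)
  | Fm.ex f => opair (natZ 5) (FmCode f)

/-- The first component of a TCI `⟨T, σ, U̇, ϑ⟩`: its theory. -/
def tciT (x : ZFSet) : ZFSet := zfst x

/-- The signature `σ` of a TCI. -/
def tciSig (x : ZFSet) : ZFSet := zfst (zsnd x)

/-- The distinguished unary relation symbol `U̇` of a TCI. -/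
def tciUdot (x : ZFSet) : ZFSet := zfst (zsnd (zsnd x))

/-- The interpretation constraint map `ϑ` of a TCI. -/
def tciTheta (x : ZFSet) : ZFSet := zsnd (zsnd (zsnd x))

/-- Symbols are coded as `⟨kind, ⟨arity, name⟩⟩` with kind `0` (relation),
`1` (function) or `2` (constant). -/
def symKind (s : ZFSet) : ZFSet := zfst s

/-- The (internal) arity of a symbol. -/
def symArity (s : ZFSet) : ZFSet := zfst (zsnd s)

/-- A well-formed symbol. -/
def IsSymbol (s : ZFSet) : Prop :=
  ∃ k a nm, s = opair k (opair a nm) ∧ (k = natZ 0 ∨ k = natZ 1 ∨ k = natZ 2) ∧ ∃ n : ℕ, a = natZ n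

/-- Decode an internal von Neumann natural. -/
def zToNat (a : ZFSet) : ℕ := if h : ∃ n, natZ n = a then h.choose else 0

/-- The arity of a symbol, as a natural number. -/
def arityOf (s : ZFSet) : ℕ := zToNat (symArity s)

/-- A term uses only symbols of the signature `σ` (with correct kinds and
arities) and no parameters. -/
def Tm.usesSig (σ : ZFSet) : Tm → Prop
  | Tm.var _ => True
  | Tm.param _ => False
  | Tm.func s n a => s ∈ σ ∧
      ((symKind s = natZ 1 ∧ symArity s = natZ n) ∨ (symKind s = natZ 2 ∧ n = 0)) ∧
      ∀ i, Tm.usesSig σ (a i)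

/-- A formula over the signature `σ` (no parameters). -/
def Fm.usesSig (σ : ZFSet) : Fm → Prop
  | Fm.rel s n a => s ∈ σ ∧ symKind s = natZ 0 ∧ symArity s = natZ n ∧ ∀ i, Tm.usesSig σ (a i)
  | Fm.eq t u => Tm.usesSig σ t ∧ Tm.usesSig σ u
  | Fm.not f => Fm.usesSig σ f
  | Fm.imp f g => Fm.usesSig σ f ∧ Fm.usesSig σ g
  | Fm.all f => Fm.usesSig σ f
  | Fm.ex f => Fm.usesSig σ f

/-- Same as `Fm.usesSig` but allowing set parameters (used for literals
with parameters). -/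
def Tm.usesSigP (σ : ZFSet) : Tm → Prop
  | Tm.var _ => True
  | Tm.param _ => True
  | Tm.func s n a => s ∈ σ ∧
      ((symKind s = natZ 1 ∧ symArity s = natZ n) ∨ (symKind s = natZ 2 ∧ n = 0)) ∧
      ∀ i, Tm.usesSigP σ (a i)

/-- A formula over the signature `σ`, allowing set parameters. -/
def Fm.usesSigP (σ : ZFSet) : Fm → Prop
  | Fm.rel s n a => s ∈ σ ∧ symKind s = natZ 0 ∧ symArity s = natZ n ∧ ∀ i, Tm.usesSigP σ (a i)
  | Fm.eq t u => Tm.usesSigP σ t ∧ Tm.usesSigP σ u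
  | Fm.not f => Fm.usesSigP σ f
  | Fm.imp f g => Fm.usesSigP σ f ∧ Fm.usesSigP σ g
  | Fm.all f => Fm.usesSigP σ f
  | Fm.ex f => Fm.usesSigP σ f

/-- Atomic formulas. -/
def Fm.isAtom : Fm → Prop
  | Fm.rel _ _ _ => True
  | Fm.eq _ _ => True
  | _ => False

/-- `x` is (the code of) a theory with constraints in interpretation:
a tuple `⟨T, σ, U̇, ϑ⟩` where `T` is a set of (codes of) first-order
sentences over `σ`, `U̇` is a unary relation symbol not in `σ`, and `ϑ`
maps each symbol of `σ ∪ {U̇}` to a pair `(y, i)` with `i ∈ {0, 1}` and `y`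
included in a finite cartesian power of the first component `z` of `ϑ(U̇)`,
with the disjointness conditions on the powers of `z` from the paper. -/
def IsTCI (x : ZFSet) : Prop :=
  x = opair (tciT x) (opair (tciSig x) (opair (tciUdot x) (tciTheta x))) ∧
  (∀ s ∈ tciSig x, IsSymbol s) ∧
  IsSymbol (tciUdot x) ∧ symKind (tciUdot x) = natZ 0 ∧ symArity (tciUdot x) = natZ 1 ∧
  tciUdot x ∉ tciSig x ∧
  IsZFunc (tciTheta x) (insert (tciUdot x) (tciSig x)) ∧
  (∀ s ∈ insert (tciUdot x) (tciSig x),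
    ∃ y i, iapp (tciTheta x) s = opair y i ∧ (i = natZ 0 ∨ i = natZ 1) ∧
      ∃ n : ℕ, y ⊆ ZPow (zfst (iapp (tciTheta x) (tciUdot x))) n) ∧
  (∀ n : ℕ, 1 < n →
    zfst (iapp (tciTheta x) (tciUdot x)) ∩
      ZPow (zfst (iapp (tciTheta x) (tciUdot x))) n = ∅) ∧
  (∀ m n : ℕ, 1 < m → m < n →
    ZPow (zfst (iapp (tciTheta x) (tciUdot x))) m ∩
      ZPow (zfst (iapp (tciTheta x) (tciUdot x))) n = ∅) ∧
  (∀ c ∈ tciT x, ∃ f : Fm, FmCode f = c ∧ Fm.free f = ∅ ∧ Fm.usesSig (tciSig x) f)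

/-- Satisfaction in a coded structure `M = ⟨U, I⟩`: relation symbols are
interpreted by `I` via internal tuples, function and constant symbols by the
(graph) values recorded in `I`. -/
def SatStr (M : ZFSet) (f : Fm) : Prop :=
  Sat (· ∈ zfst M) (fun s args => ztuple args ∈ iapp (zsnd M) s)
    (fun s args => if args = [] then iapp (zsnd M) s
      else Classical.epsilon fun b => ztuple (args ++ [b]) ∈ iapp (zsnd M) s)
    f (fun _ => ∅)

/-- The modelling relation `M ⊨* 𝔗` between coded structures and TCIs. -/
def ModelsTCI (M x : ZFSet) : Prop :=
  IsTCI x ∧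
  M = opair (zfst M) (zsnd M) ∧
  IsZFunc (zsnd M) (tciSig x) ∧
  -- the constraint on the universe
  (∀ y i, iapp (tciTheta x) (tciUdot x) = opair y i →
    (i = natZ 0 → zfst M ⊆ y) ∧ (i = natZ 1 → zfst M = y)) ∧
  -- the constraints on the symbols of the signature
  (∀ s ∈ tciSig x, ∀ y i, iapp (tciTheta x) s = opair y i →
    (symKind s = natZ 0 →
      (i = natZ 0 → iapp (zsnd M) s ⊆ y ∩ ZPow (zfst M) (arityOf s)) ∧
      (i = natZ 1 → iapp (zsnd M) s = y ∩ ZPow (zfst M) (arityOf s))) ∧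
    (symKind s = natZ 1 →
      (∀ args : List ZFSet, args.length = arityOf s → (∀ a ∈ args, a ∈ zfst M) →
        ∃! b, b ∈ zfst M ∧ ztuple (args ++ [b]) ∈ iapp (zsnd M) s) ∧
      (i = natZ 0 → iapp (zsnd M) s ⊆ y ∩ ZPow (zfst M) (arityOf s + 1)) ∧
      (i = natZ 1 → iapp (zsnd M) s = y ∩ ZPow (zfst M) (arityOf s + 1))) ∧
    (symKind s = natZ 2 → iapp (zsnd M) s ∈ y ∧ iapp (zsnd M) s ∈ zfst M)) ∧
  -- `M` satisfies the theory
  (∀ c ∈ tciT x, ∀ f : Fm, FmCode f = c → SatStr M f)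

/-- A `Π_n` TCI: one whose theory contains only `Π_n` sentences. -/
def IsPiTCI (n : ℕ) (x : ZFSet) : Prop :=
  IsTCI x ∧ ∀ c ∈ tciT x, ∃ f : Fm, FmCode f = c ∧ IsPi n f

/-- A `Σ_n` TCI: one whose theory contains only `Σ_n` sentences. -/
def IsSigmaTCI (n : ℕ) (x : ZFSet) : Prop :=
  IsTCI x ∧ ∀ c ∈ tciT x, ∃ f : Fm, FmCode f = c ∧ IsSigma n f

/-- A TCI in `V` is consistent iff it has a model in some outer model of `V`. -/
def ConsistentTCI (V x : ZFSet) : Prop :=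
  ∃ W M, OuterModel V W ∧ M ∈ W ∧ ModelsTCI M x

/-! ### the language fragment `𝓛_𝔗` and the diagram `Σ(𝔗, M)` -/

/-- The set of codes of atomic sentences (with parameters) associated to a
symbol `s` of a TCI `x`, as in the proof of Proposition 3.22 of the paper. -/
def codesFor (x s : ZFSet) : ZFSet :=
  if symKind s = natZ 0 then
    zimage (fun t => FmCode (Fm.rel s (arityOf s)
      fun i => Tm.param ((decodeTuple (arityOf s) t).getD i ∅)))
      (zfst (iapp (tciTheta x) s))
  else if symKind s = natZ 1 then
    zimage (fun t => FmCode (Fm.eq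
      (Tm.func s (arityOf s) fun i => Tm.param ((decodeTuple (arityOf s + 1) t).getD i ∅))
      (Tm.param ((decodeTuple (arityOf s + 1) t).getD (arityOf s) ∅))))
      (zfst (iapp (tciTheta x) s))
  else
    zimage (fun a => FmCode (Fm.eq (Tm.func s 0 Fin.elim0) (Tm.param a)))
      (zfst (iapp (tciTheta x) s))

/-- The atomic sentences of `𝓛_𝔗`. -/
def LLbase (x : ZFSet) : ZFSet :=
  ZFSet.sUnion (zimage (fun s => codesFor x s) (insert (tciUdot x) (tciSig x)))

/-- The language fragment `𝓛_𝔗`: atomic sentences with parameters, closed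
under negation. -/
def LL (x : ZFSet) : ZFSet :=
  LLbase x ∪ zimage (fun t => opair (natZ 2) t) (LLbase x)

/-- A literal of `𝓛_𝔗` true in the structure `M` (with `U̇` interpreted as
the domain of `M`). -/
def LitTrue (x M : ZFSet) (f : Fm) : Prop :=
  (∃ a, f = Fm.rel (tciUdot x) 1 (fun _ => Tm.param a) ∧ a ∈ zfst M) ∨
  (∃ a, f = Fm.not (Fm.rel (tciUdot x) 1 (fun _ => Tm.param a)) ∧ a ∉ zfst M) ∨
  (∃ g, (f = g ∨ f = Fm.not g) ∧ Fm.isAtom g ∧ Fm.usesSigP (tciSig x) g ∧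
    (∀ a ∈ Fm.paramSet g, a ∈ zfst M) ∧
    (f = g → SatStr M g) ∧ (f = Fm.not g → ¬ SatStr M g))

/-- The `𝔗`-specific atomic diagram `Σ(𝔗, M)` of a model `M` of `𝔗`. -/
def SigmaSet (x M : ZFSet) : ZFSet :=
  ZFSet.sep (fun c => ∃ f : Fm, FmCode f = c ∧ LitTrue x M f) (LL x)

/-! ### forcing notions and generic filters -/

/-- A forcing notion coded as a pair `⟨P, ≤⟩` of a set of conditions and a
partial order (a set of Kuratowski pairs). -/
def IsForcing (P : ZFSet) : Prop :=
  P = opair (zfst P) (zsnd P) ∧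
  (∀ q ∈ zsnd P, ∃ a ∈ zfst P, ∃ b ∈ zfst P, q = opair a b) ∧
  (∀ a ∈ zfst P, opair a a ∈ zsnd P) ∧
  (∀ a b c : ZFSet, opair a b ∈ zsnd P → opair b c ∈ zsnd P → opair a c ∈ zsnd P) ∧
  (∀ a b : ZFSet, opair a b ∈ zsnd P → opair b a ∈ zsnd P → a = b)

/-- `a ≤ b` in the coded forcing `P` (`a` extends, i.e. is stronger than, `b`). -/
def ple (P a b : ZFSet) : Prop := opair a b ∈ zsnd P

/-- `g` is a filter on the coded forcing `P`. -/
def IsFilterOn (P g : ZFSet) : Prop :=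
  g ⊆ zfst P ∧
  (∀ p ∈ g, ∀ q ∈ zfst P, ple P p q → q ∈ g) ∧
  (∀ p ∈ g, ∀ q ∈ g, ∃ r ∈ g, ple P r p ∧ ple P r q)

/-- `D` is a dense subset of the coded forcing `P`. -/
def IsDenseIn (P D : ZFSet) : Prop :=
  D ⊆ zfst P ∧ ∀ p ∈ zfst P, ∃ q ∈ D, ple P q p

/-- `g` is a `P`-generic filter over `V`: a filter on `P` meeting all dense
subsets of `P` lying in `V`. -/
def GenericFilterOver (V P g : ZFSet) : Prop :=
  IsFilterOn P g ∧ ∀ D ∈ V, IsDenseIn P D → ∃ q ∈ g, q ∈ D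

/-- `p` is an atom of the coded forcing `P`: any two extensions of `p`
are compatible. -/
def PAtom (P p : ZFSet) : Prop :=
  p ∈ zfst P ∧ ∀ q₁ ∈ zfst P, ∀ q₂ ∈ zfst P, ple P q₁ p → ple P q₂ p →
    ∃ r ∈ zfst P, ple P r q₁ ∧ ple P r q₂

/-- An atomless forcing notion. -/
def Atomless (P : ZFSet) : Prop := ∀ p ∈ zfst P, ¬ PAtom P p

/-- `g_p(ℙ) = {q ∈ P : q` is compatible with `p}`. -/
def gpSet (P p : ZFSet) : ZFSet :=
  ZFSet.sep (fun q => ∃ r ∈ zfst P, ple P r q ∧ ple P r p) (zfst P)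

/-- The reverse-inclusion order on a set `p` of conditions, as a set of pairs. -/
def supsetOrder (p : ZFSet) : ZFSet :=
  ZFSet.sep (fun q => ∃ a ∈ p, ∃ b ∈ p, q = opair a b ∧ b ⊆ a) (ZFSet.prod p p)

/-! ### the forcings `ℙ(𝔗)` and their derivatives -/

/-- `P(𝔗)`: finite subsets of `𝓛_𝔗` included in `Σ(𝔗, M)` for some model
`M` of `𝔗` in some outer model of `V`. -/
def PT (V x : ZFSet) : ZFSet :=
  ZFSet.sep
    (fun p => ∃ W M, OuterModel V W ∧ M ∈ W ∧ ModelsTCI M x ∧ p ⊆ SigmaSet x M)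
    (finSubsets (LL x))

/-- The forcing notion `ℙ(𝔗) = (P(𝔗), ⊇)`. -/
def Pforcing (V x : ZFSet) : ZFSet := opair (PT V x) (supsetOrder (PT V x))

/-- `q` is an atom of a `⊇`-ordered set `P` of conditions. -/
def SupAtomIn (P q : ZFSet) : Prop :=
  q ∈ P ∧ ∀ q₁ ∈ P, ∀ q₂ ∈ P, q ⊆ q₁ → q ⊆ q₂ → ∃ r ∈ P, q₁ ⊆ r ∧ q₂ ⊆ r

/-- The derivative forcings `P(𝔗)^{(α)}`: conditions certified by the diagram
of a model of `𝔗` avoiding all atoms of all earlier stages (stage `0` is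
`P(𝔗)` itself). -/
def PTa (V x : ZFSet) : Ordinal.{1} → ZFSet :=
  WellFounded.fix wellFounded_lt fun α rec =>
    ZFSet.sep
      (fun p => ∃ W M, OuterModel V W ∧ M ∈ W ∧ ModelsTCI M x ∧ p ⊆ SigmaSet x M ∧
        ∀ β, ∀ h : β < α, ∀ q, SupAtomIn (rec β h) q → ¬ q ⊆ SigmaSet x M)
      (finSubsets (LL x))

/-- The ordinal `|[𝓛_𝔗]^{<ω}|⁺`, bounding the derivative process. -/
def cardBound (x : ZFSet) : Ordinal.{1} :=
  (Order.succ (Cardinal.mk (finSubsets (LL x)).toSet)).ord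

/-- The fixed point `P(𝔗)^⊤` of the derivative process. -/
def PTtopSet (V x : ZFSet) : ZFSet :=
  PTa V x (sInf {α : Ordinal.{1} | PTa V x α = PTa V x (Order.succ α)})

/-- The forcing notion `ℙ(𝔗)^⊤`. -/
def PtopForcing (V x : ZFSet) : ZFSet :=
  opair (PTtopSet V x) (supsetOrder (PTtopSet V x))

/-- `M` is an almost finitely determined model of `𝔗`: `p ⊆ Σ(𝔗, M)` for
some atom `p` of some derivative forcing `ℙ(𝔗)^{(α)}`, `α < |[𝓛_𝔗]^{<ω}|⁺`. -/
def AlmostFinDet (V x M : ZFSet) : Prop :=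
  ModelsTCI M x ∧ ∃ α : Ordinal.{1}, α < cardBound x ∧
    ∃ p, SupAtomIn (PTa V x α) p ∧ p ⊆ SigmaSet x M

/-- All models of `𝔗` in outer models of `V` are almost finitely determined. -/
def AllAFD (V x : ZFSet) : Prop :=
  ∀ W M, OuterModel V W → M ∈ W → ModelsTCI M x → AlmostFinDet V x M

/-! ### the TCI `𝔗(ℙ)` of a forcing notion -/

/-- The symbol `≤̇` (binary relation). -/
def leSym : ZFSet := opair (natZ 0) (opair (natZ 2) (natZ 0))

/-- The symbol `Ġ` (unary relation) for the generic filter. -/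
def gSym : ZFSet := opair (natZ 0) (opair (natZ 1) (natZ 1))

/-- The symbol `Ḋ` (unary relation) associated to the dense set `D`. -/
def dSym (D : ZFSet) : ZFSet := opair (natZ 0) (opair (natZ 1) (opair (natZ 2) D))

/-- The distinguished symbol `U̇` used for `𝔗(ℙ)` and `𝔗_s`. -/
def udSym : ZFSet := opair (natZ 0) (opair (natZ 1) (natZ 3))

/-- The set of dense subsets of a coded forcing notion `P`. -/
def denseSets (P : ZFSet) : ZFSet :=
  ZFSet.sep (fun D => ∀ p ∈ zfst P, ∃ q ∈ D, ple P q p) (ZFSet.powerset (zfst P))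

/-- `Ġ(i)` as a formula. -/
def relG (i : ℕ) : Fm := Fm.rel gSym 1 (fun _ => Tm.var i)

/-- `i ≤̇ j` as a formula. -/
def relLe (i j : ℕ) : Fm := Fm.rel leSym 2 ![Tm.var i, Tm.var j]

/-- The sentences of `𝔗(ℙ)`: `Ġ` is a filter meeting each dense set. -/
def TofPTheory (P : ZFSet) : ZFSet :=
  insert (FmCode (Fm.all (Fm.all (Fm.ex (Fm.imp (Fm.and (relG 2) (relG 1))
      (Fm.and (relG 0) (Fm.and (relLe 0 2) (relLe 0 1))))))))
    (insert (FmCode (Fm.all (Fm.all (Fm.imp (Fm.and (relLe 1 0) (relG 1)) (relG 0)))))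
      (zimage (fun D => FmCode (Fm.ex (Fm.and (relG 0) (Fm.rel (dSym D) 1 (fun _ => Tm.var 0)))))
        (denseSets P)))

/-- The constraint map of `𝔗(ℙ)`. -/
def TofPTheta (P : ZFSet) : ZFSet :=
  insert (opair udSym (opair (zfst P) (natZ 1)))
    (insert (opair leSym (opair (zsnd P) (natZ 1)))
      (insert (opair gSym (opair (zfst P) (natZ 0)))
        (zimage (fun D => opair (dSym D) (opair D (natZ 1))) (denseSets P))))

/-- The `Π₂` TCI `𝔗(ℙ)` whose models (in outer models of `V`) are exactly
the `ℙ`-generic filters over `V`. -/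
def TofP (P : ZFSet) : ZFSet :=
  opair (TofPTheory P)
    (opair (insert leSym (insert gSym (zimage dSym (denseSets P))))
      (opair udSym (TofPTheta P)))

/-! ### evaluations, local method definitions and `≤^M` -/

/-- `Eval^V(𝔗) = {V[M] : M ⊨* 𝔗` in some outer model of `V}`. -/
def EvalT (V x : ZFSet) : Set ZFSet :=
  {W' | ∃ W M, OuterModel V W ∧ M ∈ W ∧ ModelsTCI M x ∧ Generates V M W'}

/-- A valuation loading one set at variable `0`. -/
def vone (a : ZFSet) : ℕ → ZFSet := fun n => if n = 0 then a else ∅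

/-- A valuation loading two sets at variables `0`, `1`. -/
def vtwo (a b : ZFSet) : ℕ → ZFSet := fun n => if n = 0 then a else if n = 1 then b else ∅

/-- A valuation loading three sets at variables `0`, `1`, `2`. -/
def vthree (a b c : ZFSet) : ℕ → ZFSet :=
  fun n => if n = 0 then a else if n = 1 then b else if n = 2 then c else ∅

/-- The class function `F` (restricted to the class `X`) is definable in `V`
with parameters in `V`. -/
def DefFunIn (V : ZFSet) (X : ZFSet → Prop) (F : ZFSet → ZFSet) : Prop :=
  ∃ φ : Fm, Fm.memOnly φ ∧ (∀ a ∈ Fm.paramSet φ, a ∈ V) ∧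
    ∀ x, x ∈ V → X x → ∀ y, y ∈ V → (SatV V φ (vtwo x y) ↔ y = F x)

/-- A local method definition over `V`: a nonempty class of TCIs in `V`,
definable in `V` with parameters in `V`. -/
def LocalMethodDef (V : ZFSet) (X : ZFSet → Prop) : Prop :=
  (∃ t, X t) ∧ (∀ t, X t → t ∈ V ∧ IsTCI t) ∧
  ∃ φ : Fm, Fm.memOnly φ ∧ (∀ a ∈ Fm.paramSet φ, a ∈ V) ∧
    ∀ t, t ∈ V → (X t ↔ SatV V φ (vone t))

/-- The reducibility relation `X ≤^M Y` between local method definitions: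
some `V`-definable `F : X → Y` satisfies
`∅ ≠ Eval^V(F(𝔗)) ⊆ Eval^V(𝔗)` for all consistent `𝔗 ∈ X`. -/
def LeqM (V : ZFSet) (X Y : ZFSet → Prop) : Prop :=
  ∃ F : ZFSet → ZFSet, DefFunIn V X F ∧
    (∀ x, x ∈ V → X x → F x ∈ V ∧ Y (F x)) ∧
    ∀ x, x ∈ V → X x → ConsistentTCI V x →
      (EvalT V (F x)).Nonempty ∧ EvalT V (F x) ⊆ EvalT V x

/-- `X ≡^M Y`. -/
def EquivM (V : ZFSet) (X Y : ZFSet → Prop) : Prop := LeqM V X Y ∧ LeqM V Y X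

/-- The local method definition `Π^M_n` of all `Π_n` TCIs. -/
def PiM (n : ℕ) : ZFSet → Prop := IsPiTCI n

/-- The local method definition `Σ^M_n` of all `Σ_n` TCIs. -/
def SigmaM (n : ℕ) : ZFSet → Prop := IsSigmaTCI n

/-- The local method definition `Fg = {𝔗(ℙ) : ℙ` a forcing notion in `V}`. -/
def FgClass (V : ZFSet) : ZFSet → Prop :=
  fun t => ∃ P, P ∈ V ∧ IsForcing P ∧ t = TofP P

/-! ### H(κ), collapse forcing, and structure-genericity -/

/-- `H` is (the code of) `H(|trcl(t)|⁺)` as computed inside `V`: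
the set of all `y ∈ V` whose transitive closure admits, in `V`,
an injection into the transitive closure of `t`. -/
def IsHIn (V t H : ZFSet) : Prop :=
  H ∈ V ∧ ∀ y, (y ∈ H ↔ (y ∈ V ∧
    ∀ ty tt, IsTrclOf {y} ty → IsTrclOf t tt → ∃ j ∈ V, ZInjFun j ty tt))

/-- The conditions of the collapse `Col(ω, λ)`: finite partial functions
from `ω` to `λ`. -/
def ColSet (lam : ZFSet) : ZFSet :=
  ZFSet.sep
    (fun f => (∀ q ∈ f, ∃ a b, q = opair a b) ∧
      (∀ a b b' : ZFSet, opair a b ∈ f → opair a b' ∈ f → b = b') ∧ f.toSet.Finite)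
    (ZFSet.powerset (ZFSet.prod ZFSet.omega lam))

/-- The collapse forcing `Col(ω, λ)`, ordered by reverse inclusion. -/
def ColForcing (lam : ZFSet) : ZFSet := opair (ColSet lam) (supsetOrder (ColSet lam))

/-- `g` is a `P`-generic filter over the ∈-structure with domain `H`:
a filter on `P` meeting every dense subset of `P` definable over `(H; ∈)`
with parameters in `H`. -/
def GenericOverStruct (H P g : ZFSet) : Prop :=
  IsFilterOn P g ∧
  ∀ φ : Fm, Fm.memOnly φ → (∀ a ∈ Fm.paramSet φ, a ∈ H) →
    ((∀ p ∈ zfst P, ∃ q ∈ zfst P, SatV H φ (vone q) ∧ ple P q p) →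
      ∃ q ∈ g, SatV H φ (vone q))

/-- The `Π₀` TCI `𝔗_s` whose models in any outer model are the subsets of `s`. -/
def Tsub (s : ZFSet) : ZFSet :=
  opair ∅ (opair ∅ (opair udSym ({opair udSym (opair s (natZ 0))} : ZFSet)))

end SmallExt

namespace SmallExt

/-- `g_p` for a `⊇`-ordered set of conditions `P`:
the conditions compatible with `p`. -/
def gpSup (P p : ZFSet) : ZFSet :=
  ZFSet.sep (fun q => ∃ r ∈ P, q ⊆ r ∧ p ⊆ r) P

/-- Outer models among arbitrary (not necessarily countable) transitive
models of ZFC. -/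
def OuterModelT (U W : ZFSet) : Prop :=
  IsTransModel U ∧ IsTransModel W ∧ U ⊆ W ∧ ∀ y ∈ W, IsOrd y → y ∈ U

/-- Consistency of a TCI relative to a transitive model `U` of ZFC. -/
def ConsistentT (U x : ZFSet) : Prop :=
  ∃ W M, OuterModelT U W ∧ M ∈ W ∧ ModelsTCI M x

end SmallExt


namespace SmallExt

section Aux

/-- satisfaction over domain class `D` with standard `∈` interpretation. -/
def SatD (D : ZFSet → Prop) (f : Fm) (v : ℕ → ZFSet) : Prop :=
  Sat D memRel (fun _ _ => ∅) f v

lemma SatU_eq_SatD (f : Fm) (v : ℕ → ZFSet) : SatU f v = SatD (fun _ => True) f v := rfl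

lemma SatV_eq_SatD (W : ZFSet) (f : Fm) (v : ℕ → ZFSet) : SatV W f v = SatD (· ∈ W) f v := rfl

/-- a good domain class: transitive, closed under unordered pairs, containing `∅`. -/
structure GoodDom (D : ZFSet → Prop) : Prop where
  trans : ∀ {y z : ZFSet}, D y → z ∈ y → D z
  upair : ∀ {a b : ZFSet}, D a → D b → D ({a, b} : ZFSet)
  empty : D ∅

lemma goodDomTrue : GoodDom (fun _ => True) := ⟨fun _ _ => trivial, fun _ _ => trivial, trivial⟩

lemma GoodDom.sgl {D} (h : GoodDom D) {a : ZFSet} (ha : D a) : D ({a} : ZFSet) := by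
  have : ({a, a} : ZFSet) = ({a} : ZFSet) := by
    ext z; simp
  simpa [this] using h.upair ha ha

lemma GoodDom.opair {D} (h : GoodDom D) {a b : ZFSet} (ha : D a) (hb : D b) :
    D (SmallExt.opair a b) := by
  have : SmallExt.opair a b = ({({a} : ZFSet), ({a, b} : ZFSet)} : ZFSet) := rfl
  rw [this]
  exact h.upair (h.sgl ha) (h.upair ha hb)

lemma natZ_one_eq : natZ 1 = ({∅} : ZFSet) := by
  ext z; simp [natZ]

lemma natZ_two_eq : natZ 2 = ({natZ 1, ∅} : ZFSet) := by
  ext z; simp [natZ, natZ_one_eq]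

lemma GoodDom.nat0 {D} (h : GoodDom D) : D (natZ 0) := h.empty
lemma GoodDom.nat1 {D} (h : GoodDom D) : D (natZ 1) := by
  rw [natZ_one_eq]; exact h.sgl h.empty
lemma GoodDom.nat2 {D} (h : GoodDom D) : D (natZ 2) := by
  rw [natZ_two_eq]; exact h.upair h.nat1 h.empty

/-- valuations all of whose values lie in `D`. -/
def VOK (D : ZFSet → Prop) (v : ℕ → ZFSet) : Prop := ∀ n, D (v n)

lemma VOK.cons {D v} (hv : VOK D v) {z : ZFSet} (hz : D z) : VOK D (vcons z v) := by
  intro n; cases n with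
  | zero => exact hz
  | succ n => exact hv n

variable {D : ZFSet → Prop} {v : ℕ → ZFSet}

lemma sat_mem2 {i j : ℕ} : SatD D (mem2 i j) v ↔ v i ∈ v j := by
  simp only [SatD, Sat, mem2, memRel, Tm.eval, List.ofFn, Fin.foldr_succ, Fin.foldr_zero,
    Matrix.cons_val_zero, Matrix.cons_val_one, Matrix.head_cons, true_and]
  constructor
  · rintro ⟨a, b, h1, h⟩
    have h2 : v i = a ∧ v j = b := by simpa [Tm.eval] using h1
    rw [h2.1, h2.2]; exact h
  · exact fun h => ⟨_, _, rfl, h⟩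

lemma sat_eq2 {i j : ℕ} : SatD D (eq2 i j) v ↔ v i = v j := by
  simp [SatD, Sat, eq2, Tm.eval]

lemma sat_not {f : Fm} : SatD D (Fm.not f) v ↔ ¬ SatD D f v := Iff.rfl
lemma sat_imp {f g : Fm} : SatD D (Fm.imp f g) v ↔ (SatD D f v → SatD D g v) := Iff.rfl
lemma sat_and {f g : Fm} : SatD D (Fm.and f g) v ↔ (SatD D f v ∧ SatD D g v) := by
  simp [Fm.and, SatD, Sat]
lemma sat_or {f g : Fm} : SatD D (Fm.or f g) v ↔ (SatD D f v ∨ SatD D g v) := by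
  simp [Fm.or, SatD, Sat]; tauto
lemma sat_iff {f g : Fm} : SatD D (Fm.iff f g) v ↔ (SatD D f v ↔ SatD D g v) := by
  simp [Fm.iff, Fm.and, SatD, Sat]; tauto
lemma sat_all {f : Fm} : SatD D (Fm.all f) v ↔ ∀ z, D z → SatD D f (vcons z v) := Iff.rfl
lemma sat_ex {f : Fm} : SatD D (Fm.ex f) v ↔ ∃ z, D z ∧ SatD D f (vcons z v) := Iff.rfl

/-- bounded existential: `∃ x ∈ var j, f`. -/
def bexF (j : ℕ) (f : Fm) : Fm := Fm.ex (Fm.and (mem2 0 (j + 1)) f)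

/-- bounded universal: `∀ x ∈ var j, f`. -/
def ballF (j : ℕ) (f : Fm) : Fm := Fm.all (Fm.imp (mem2 0 (j + 1)) f)

lemma sat_bexF (hD : GoodDom D) (hv : VOK D v) {j : ℕ} {f : Fm} :
    SatD D (bexF j f) v ↔ ∃ z ∈ v j, SatD D f (vcons z v) := by
  constructor
  · rintro ⟨z, hz, h⟩
    have h' := sat_and.mp h
    exact ⟨z, sat_mem2.mp h'.1, h'.2⟩
  · rintro ⟨z, hz, h⟩
    exact ⟨z, hD.trans (hv j) hz, sat_and.mpr ⟨sat_mem2.mpr hz, h⟩⟩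

lemma sat_ballF (hD : GoodDom D) (hv : VOK D v) {j : ℕ} {f : Fm} :
    SatD D (ballF j f) v ↔ ∀ z ∈ v j, SatD D f (vcons z v) := by
  constructor
  · intro h z hz
    exact (h z (hD.trans (hv j) hz)) (sat_mem2.mpr hz)
  · intro h z _ hz
    exact h z (sat_mem2.mp hz)

end Aux
end SmallExt

namespace SmallExt
section Aux2
variable {D : ZFSet → Prop} {v : ℕ → ZFSet}

/-- `var e = ∅`. -/
def empF (e : ℕ) : Fm := Fm.all (Fm.not (mem2 0 (e + 1)))

lemma sat_empF (hD : GoodDom D) (hv : VOK D v) {e : ℕ} :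
    SatD D (empF e) v ↔ v e = ∅ := by
  constructor
  · intro h
    ext z
    simp only [ZFSet.notMem_empty, iff_false]
    intro hz
    exact (h z (hD.trans (hv e) hz)) (sat_mem2.mpr hz)
  · intro h z _ hz
    have hm : z ∈ v e := sat_mem2.mp hz
    rw [h] at hm
    exact ZFSet.notMem_empty z hm

/-- `var w = {var a}`. -/
def sglF (w a : ℕ) : Fm := Fm.and (mem2 a w) (ballF w (eq2 0 (a + 1)))

lemma sat_sglF (hD : GoodDom D) (hv : VOK D v) {w a : ℕ} :
    SatD D (sglF w a) v ↔ v w = ({v a} : ZFSet) := by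
  rw [sglF, sat_and, sat_mem2, sat_ballF hD hv]
  constructor
  · rintro ⟨h1, h2⟩
    ext z
    simp only [ZFSet.mem_singleton]
    exact ⟨fun hz => sat_eq2.mp (h2 z hz), fun hz => hz ▸ h1⟩
  · intro h
    refine ⟨by simp [h], fun z hz => sat_eq2.mpr ?_⟩
    show z = v a
    simpa [h] using hz

/-- `var w = {var a, var b}`. -/
def uprF (w a b : ℕ) : Fm :=
  Fm.and (mem2 a w) (Fm.and (mem2 b w) (ballF w (Fm.or (eq2 0 (a + 1)) (eq2 0 (b + 1)))))

lemma sat_uprF (hD : GoodDom D) (hv : VOK D v) {w a b : ℕ} :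
    SatD D (uprF w a b) v ↔ v w = ({v a, v b} : ZFSet) := by
  rw [uprF, sat_and, sat_mem2, sat_and, sat_mem2, sat_ballF hD hv]
  constructor
  · rintro ⟨h1, h2, h3⟩
    ext z
    simp only [ZFSet.mem_insert_iff, ZFSet.mem_singleton]
    refine ⟨fun hz => ?_, fun hz => ?_⟩
    · rcases sat_or.mp (h3 z hz) with h | h
      · exact Or.inl (sat_eq2.mp h)
      · exact Or.inr (sat_eq2.mp h)
    · rcases hz with h | h <;> rw [h] <;> assumption
  · intro h
    refine ⟨by simp [h], by simp [h], fun z hz => sat_or.mpr ?_⟩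
    have : z = v a ∨ z = v b := by simpa [h] using hz
    rcases this with h' | h'
    · exact Or.inl (sat_eq2.mpr h')
    · exact Or.inr (sat_eq2.mpr h')

/-- `var p = opair (var a) (var b)`. -/
def pairF (p a b : ℕ) : Fm :=
  Fm.and (Fm.ex (Fm.and (sglF 0 (a + 1)) (mem2 0 (p + 1))))
    (Fm.and (Fm.ex (Fm.and (uprF 0 (a + 1) (b + 1)) (mem2 0 (p + 1))))
      (ballF p (Fm.or (sglF 0 (a + 1)) (uprF 0 (a + 1) (b + 1)))))

lemma opair_eq_upair (a b : ZFSet) :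
    opair a b = ({({a} : ZFSet), ({a, b} : ZFSet)} : ZFSet) := rfl

lemma sat_pairF (hD : GoodDom D) (hv : VOK D v) {p a b : ℕ} :
    SatD D (pairF p a b) v ↔ v p = opair (v a) (v b) := by
  rw [pairF, sat_and, sat_and, sat_ballF hD hv]
  constructor
  · rintro ⟨⟨z1, hz1, h1⟩, ⟨z2, hz2, h2⟩, h3⟩
    have e1 := sat_and.mp h1
    have e2 := sat_and.mp h2
    have m1 : z1 ∈ v p := sat_mem2.mp e1.2
    have m2 : z2 ∈ v p := sat_mem2.mp e2.2
    have q1 : z1 = ({v a} : ZFSet) := sat_sglF hD (hv.cons hz1) |>.mp e1.1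
    have q2 : z2 = ({v a, v b} : ZFSet) := sat_uprF hD (hv.cons hz2) |>.mp e2.1
    rw [opair_eq_upair]
    ext z
    simp only [ZFSet.mem_insert_iff, ZFSet.mem_singleton]
    constructor
    · intro hz
      rcases sat_or.mp (h3 z hz) with h | h
      · exact Or.inl ((sat_sglF hD (hv.cons (hD.trans (hv p) hz))).mp h)
      · exact Or.inr ((sat_uprF hD (hv.cons (hD.trans (hv p) hz))).mp h)
    · rintro (h | h)
      · rw [h, ← q1]; exact m1
      · rw [h, ← q2]; exact m2
  · intro h
    have hsa : D ({v a} : ZFSet) := hD.sgl (hv a)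
    have hsab : D ({v a, v b} : ZFSet) := hD.upair (hv a) (hv b)
    refine ⟨⟨({v a} : ZFSet), hsa, sat_and.mpr ⟨(sat_sglF hD (hv.cons hsa)).mpr rfl, sat_mem2.mpr ?_⟩⟩,
      ⟨({v a, v b} : ZFSet), hsab, sat_and.mpr ⟨(sat_uprF hD (hv.cons hsab)).mpr rfl, sat_mem2.mpr ?_⟩⟩,
      fun z hz => sat_or.mpr ?_⟩
    · show ({v a} : ZFSet) ∈ v p
      rw [h, opair_eq_upair]; simp
    · show ({v a, v b} : ZFSet) ∈ v p
      rw [h, opair_eq_upair]; simp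
    · have : z = ({v a} : ZFSet) ∨ z = ({v a, v b} : ZFSet) := by
        rw [h, opair_eq_upair] at hz
        simpa using hz
      have hdz : D z := hD.trans (hv p) hz
      rcases this with h' | h'
      · exact Or.inl ((sat_sglF hD (hv.cons hdz)).mpr h')
      · exact Or.inr ((sat_uprF hD (hv.cons hdz)).mpr h')

/-- `var c = natZ 1`. -/
def oneF (c : ℕ) : Fm := Fm.and (bexF c (empF 0)) (ballF c (empF 0))

/-- `var c = natZ 2`. -/
def twoF (c : ℕ) : Fm := Fm.and (bexF c (empF 0))
  (Fm.and (bexF c (oneF 0)) (ballF c (Fm.or (empF 0) (oneF 0))))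

/-- `var c = natZ k` for `k < 3`. -/
def natF (k c : ℕ) : Fm := if k = 0 then empF c else if k = 1 then oneF c else twoF c

lemma sat_natF1 (hD : GoodDom D) (hv : VOK D v) {c : ℕ} :
    SatD D (oneF c) v ↔ v c = natZ 1 := by
  rw [oneF, sat_and, sat_bexF hD hv, sat_ballF hD hv, natZ_one_eq]
  constructor
  · rintro ⟨⟨z, hz, h1⟩, h2⟩
    have hz0 : z = ∅ := (sat_empF hD (hv.cons (hD.trans (hv c) hz))).mp h1
    ext y
    simp only [ZFSet.mem_singleton]
    exact ⟨fun hy => (sat_empF hD (hv.cons (hD.trans (hv c) hy))).mp (h2 y hy),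
      fun hy => by rw [hy, ← hz0]; exact hz⟩
  · intro h
    refine ⟨⟨∅, by simp [h], (sat_empF hD (hv.cons hD.empty)).mpr rfl⟩, fun z hz => ?_⟩
    have : z = ∅ := by simpa [h] using hz
    exact (sat_empF hD (hv.cons (hD.trans (hv c) hz))).mpr this

lemma sat_natF2 (hD : GoodDom D) (hv : VOK D v) {c : ℕ} :
    SatD D (twoF c) v ↔ v c = natZ 2 := by
  rw [twoF, sat_and, sat_and, sat_bexF hD hv, sat_bexF hD hv, sat_ballF hD hv, natZ_two_eq]
  constructor
  · rintro ⟨⟨z0, hz0, h0⟩, ⟨z1, hz1, h1⟩, h2⟩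
    have e0 : z0 = ∅ := (sat_empF hD (hv.cons (hD.trans (hv c) hz0))).mp h0
    have e1 : z1 = natZ 1 := (sat_natF1 hD (hv.cons (hD.trans (hv c) hz1))).mp h1
    ext y
    simp only [ZFSet.mem_insert_iff, ZFSet.mem_singleton]
    constructor
    · intro hy
      rcases sat_or.mp (h2 y hy) with h | h
      · exact Or.inr ((sat_empF hD (hv.cons (hD.trans (hv c) hy))).mp h)
      · exact Or.inl ((sat_natF1 hD (hv.cons (hD.trans (hv c) hy))).mp h)
    · rintro (h | h)
      · rw [h, ← e1]; exact hz1
      · rw [h, ← e0]; exact hz0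
  · intro h
    refine ⟨⟨∅, by simp [h], (sat_empF hD (hv.cons hD.empty)).mpr rfl⟩,
      ⟨natZ 1, by simp [h], (sat_natF1 hD (hv.cons hD.nat1)).mpr rfl⟩, fun z hz => ?_⟩
    have : z = natZ 1 ∨ z = ∅ := by simpa [h] using hz
    have hdz : D z := hD.trans (hv c) hz
    rcases this with h' | h'
    · exact sat_or.mpr (Or.inr ((sat_natF1 hD (hv.cons hdz)).mpr h'))
    · exact sat_or.mpr (Or.inl ((sat_empF hD (hv.cons hdz)).mpr h'))

lemma sat_natF (hD : GoodDom D) (hv : VOK D v) {k c : ℕ} (hk : k < 3) :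
    SatD D (natF k c) v ↔ v c = natZ k := by
  interval_cases k
  · rw [show natF 0 c = empF c from rfl, show natZ 0 = ∅ from rfl]
    exact sat_empF hD hv
  · rw [show natF 1 c = oneF c from rfl]
    exact sat_natF1 hD hv
  · rw [show natF 2 c = twoF c from rfl]
    exact sat_natF2 hD hv

/-- `var p = opair (natZ k) (var a)` for `k < 3`. -/
def tagF (k p a : ℕ) : Fm := Fm.ex (Fm.and (natF k 0) (pairF (p + 1) 0 (a + 1)))

lemma GoodDom.natk {D} (h : GoodDom D) {k : ℕ} (hk : k < 3) : D (natZ k) := by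
  interval_cases k
  · exact h.nat0
  · exact h.nat1
  · exact h.nat2

lemma sat_tagF (hD : GoodDom D) (hv : VOK D v) {k p a : ℕ} (hk : k < 3) :
    SatD D (tagF k p a) v ↔ v p = opair (natZ k) (v a) := by
  rw [tagF, sat_ex]
  constructor
  · rintro ⟨z, hz, h⟩
    have h' := sat_and.mp h
    have e1 : z = natZ k := (sat_natF hD (hv.cons hz) hk).mp h'.1
    have e2 : v p = opair z (v a) := (sat_pairF hD (hv.cons hz)).mp h'.2
    rw [e2, e1]
  · intro h
    exact ⟨natZ k, hD.natk hk, sat_and.mpr ⟨(sat_natF hD (hv.cons (hD.natk hk)) hk).mpr rfl,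
      (sat_pairF hD (hv.cons (hD.natk hk))).mpr h⟩⟩

end Aux2
end SmallExt

namespace SmallExt
section Aux3
variable {D : ZFSet → Prop} {v : ℕ → ZFSet}

/-- `k`-fold union. -/
def itU : ℕ → ZFSet → ZFSet
  | 0, t => t
  | k + 1, t => ZFSet.sUnion (itU k t)

/-- union of the `itU j` for `j ≤ k`. -/
def uptoS : ℕ → ZFSet → ZFSet
  | 0, t => t
  | k + 1, t => uptoS k t ∪ itU (k + 1) t

lemma GoodDom.itU {D} (h : GoodDom D) {t : ZFSet} (ht : D t) :
    ∀ k, ∀ z ∈ SmallExt.itU k t, D z := by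
  intro k
  induction k with
  | zero => exact fun z hz => h.trans ht hz
  | succ k ih =>
    intro z hz
    rcases ZFSet.mem_sUnion.mp hz with ⟨w, hw, hzw⟩
    exact h.trans (ih w hw) hzw

lemma GoodDom.uptoS {D} (h : GoodDom D) {t : ZFSet} (ht : D t) :
    ∀ k, ∀ z ∈ SmallExt.uptoS k t, D z := by
  intro k
  induction k with
  | zero => exact fun z hz => h.trans ht hz
  | succ k ih =>
    intro z hz
    rcases ZFSet.mem_union.mp hz with hz | hz
    · exact ih z hz
    · exact h.itU ht (k + 1) z hz

lemma uptoS_mono_succ {t : ZFSet} (k : ℕ) : uptoS k t ⊆ uptoS (k + 1) t := by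
  intro z hz
  exact ZFSet.mem_union.mpr (Or.inl hz)

lemma uptoS_mono {t : ZFSet} {j k : ℕ} (h : j ≤ k) : uptoS j t ⊆ uptoS k t := by
  induction h with
  | refl => exact fun z hz => hz
  | step _ ih => exact fun z hz => uptoS_mono_succ _ (ih hz)

lemma mem_uptoS_step {t a b : ZFSet} {k : ℕ} (hb : b ∈ uptoS k t) (hab : a ∈ b) :
    a ∈ uptoS (k + 1) t := by
  induction k with
  | zero =>
    exact ZFSet.mem_union.mpr (Or.inr (ZFSet.mem_sUnion.mpr ⟨b, hb, hab⟩))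
  | succ k ih =>
    rcases ZFSet.mem_union.mp hb with hb' | hb'
    · exact uptoS_mono_succ (k + 1) (ih hb')
    · exact ZFSet.mem_union.mpr (Or.inr (ZFSet.mem_sUnion.mpr ⟨b, hb', hab⟩))

/-- `var i ∈ itU k (var j)`. -/
def memIterF : ℕ → ℕ → ℕ → Fm
  | 0, i, j => mem2 i j
  | k + 1, i, j => Fm.ex (Fm.and (memIterF k 0 (j + 1)) (mem2 (i + 1) 0))

lemma sat_memIterF (hD : GoodDom D) :
    ∀ (k : ℕ) (i j : ℕ) (v : ℕ → ZFSet), VOK D v →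
      (SatD D (memIterF k i j) v ↔ v i ∈ itU k (v j)) := by
  intro k
  induction k with
  | zero => intro i j v hv; exact sat_mem2
  | succ k ih =>
    intro i j v hv
    rw [memIterF, sat_ex]
    constructor
    · rintro ⟨z, hz, h⟩
      have h' := sat_and.mp h
      have h1 : z ∈ itU k (v j) := by
        have := (ih 0 (j + 1) (vcons z v) (hv.cons hz)).mp h'.1
        exact this
      have h2 : v i ∈ z := sat_mem2.mp h'.2
      exact ZFSet.mem_sUnion.mpr ⟨z, h1, h2⟩
    · intro h
      rcases ZFSet.mem_sUnion.mp h with ⟨z, hz, hiz⟩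
      have hdz : D z := hD.itU (hv j) k z hz
      refine ⟨z, hdz, sat_and.mpr ⟨(ih 0 (j + 1) (vcons z v) (hv.cons hdz)).mpr ?_, sat_mem2.mpr ?_⟩⟩
      · exact hz
      · exact hiz

/-- `var i ∈ uptoS k (var j)`. -/
def uptoF : ℕ → ℕ → ℕ → Fm
  | 0, i, j => memIterF 0 i j
  | k + 1, i, j => Fm.or (uptoF k i j) (memIterF (k + 1) i j)

lemma sat_uptoF (hD : GoodDom D) (hv : VOK D v) {k i j : ℕ} :
    SatD D (uptoF k i j) v ↔ v i ∈ uptoS k (v j) := by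
  induction k with
  | zero => exact sat_mem2
  | succ k ih =>
    rw [uptoF, sat_or, ih, sat_memIterF hD (k + 1) i j v hv]
    exact (ZFSet.mem_union).symm

/-- `βsem a t`: `a` is within member-depth 12 of `t`. -/
def βsem (a t : ZFSet) : Prop := a ∈ uptoS 12 t

/-- the formula for `βsem (var i) (var j)`. -/
def betaF (i j : ℕ) : Fm := uptoF 12 i j

lemma sat_betaF (hD : GoodDom D) (hv : VOK D v) {i j : ℕ} :
    SatD D (betaF i j) v ↔ βsem (v i) (v j) := sat_uptoF hD hv

lemma GoodDom.beta {D} (h : GoodDom D) {a t : ZFSet} (ht : D t) (hb : βsem a t) : D a :=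
  h.uptoS ht 12 a hb

lemma uptoS_zero (t : ZFSet) : uptoS 0 t = t := rfl

lemma beta_def (a t : ZFSet) : βsem a t ↔ a ∈ uptoS 12 t := Iff.rfl

lemma itU_zero (t : ZFSet) : itU 0 t = t := rfl

lemma itU_succ (k : ℕ) (t : ZFSet) : itU (k + 1) t = ZFSet.sUnion (itU k t) := rfl

attribute [irreducible] itU uptoS βsem

end Aux3
end SmallExt

namespace SmallExt
section Aux4
variable {D : ZFSet → Prop} {v : ℕ → ZFSet}

lemma sgl_mem_opair {a b : ZFSet} : ({a} : ZFSet) ∈ opair a b := by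
  rw [opair_eq_upair]; simp

lemma upr_mem_opair {a b : ZFSet} : ({a, b} : ZFSet) ∈ opair a b := by
  rw [opair_eq_upair]; simp

lemma GoodDom.opair_left {D} (h : GoodDom D) {a b : ZFSet} (hp : D (SmallExt.opair a b)) : D a :=
  h.trans (h.trans hp sgl_mem_opair) (by simp)

lemma GoodDom.opair_right {D} (h : GoodDom D) {a b : ZFSet} (hp : D (SmallExt.opair a b)) : D b :=
  h.trans (h.trans hp upr_mem_opair) (by simp)

lemma opair_inj {a b a' b' : ZFSet} (h : opair a b = opair a' b') : a = a' ∧ b = b' :=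
  ZFSet.pair_injective h

/-- semantic diagram-code membership. -/
def γsem (z U I : ZFSet) : Prop :=
  (∃ a ∈ U, z = opair (natZ 0) a) ∨
  (∃ p ∈ I, ∃ a b, p = opair a b ∧ ∃ u ∈ b, z = opair (natZ 1) (opair a u)) ∨
  (∃ p ∈ I, ∃ a b, p = opair a b ∧ z = opair (natZ 2) a)

lemma GoodDom.gammaD {D} (h : GoodDom D) {z U I : ZFSet} (hU : D U) (hI : D I)
    (hg : γsem z U I) : D z := by
  rcases hg with ⟨a, ha, rfl⟩ | ⟨p, hp, a, b, hpab, u, hu, rfl⟩ | ⟨p, hp, a, b, hpab, rfl⟩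
  · exact h.opair h.nat0 (h.trans hU ha)
  · have hdp : D p := h.trans hI hp
    rw [hpab] at hdp
    exact h.opair h.nat1 (h.opair (h.opair_left hdp) (h.trans (h.opair_right hdp) hu))
  · have hdp : D p := h.trans hI hp
    rw [hpab] at hdp
    exact h.opair h.nat2 (h.opair_left hdp)

/-- the formula for `γsem (var zv) (var uv) (var iv)`. -/
def γF (zv uv iv : ℕ) : Fm :=
  Fm.or (bexF uv (tagF 0 (zv + 1) 0))
    (Fm.or
      (bexF iv (Fm.ex (Fm.ex (Fm.and (pairF 2 1 0)
        (bexF 0 (Fm.ex (Fm.and (pairF 0 3 1) (tagF 1 (zv + 5) 0))))))))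
      (bexF iv (Fm.ex (Fm.ex (Fm.and (pairF 2 1 0) (tagF 2 (zv + 3) 1))))))

lemma sat_γF (hD : GoodDom D) (hv : VOK D v) {zv uv iv : ℕ} :
    SatD D (γF zv uv iv) v ↔ γsem (v zv) (v uv) (v iv) := by
  rw [γF, sat_or, sat_or, sat_bexF hD hv, sat_bexF hD hv, sat_bexF hD hv]
  constructor
  · rintro (⟨a, ha, h⟩ | ⟨p, hp, h⟩ | ⟨p, hp, h⟩)
    · left
      have hda : D a := hD.trans (hv uv) ha
      have : vcons a v (zv + 1) = opair (natZ 0) (vcons a v 0) :=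
        (sat_tagF hD (hv.cons hda) (by norm_num)).mp h
      exact ⟨a, ha, this⟩
    · right; left
      have hdp : D p := hD.trans (hv iv) hp
      have hv1 := hv.cons hdp
      rcases sat_ex.mp h with ⟨a, hda, h⟩
      have hv2 := hv1.cons hda
      rcases sat_ex.mp h with ⟨b, hdb, h⟩
      have hv3 := hv2.cons hdb
      have h' := sat_and.mp h
      have hpab : p = opair a b := (sat_pairF hD hv3).mp h'.1
      rcases (sat_bexF hD hv3).mp h'.2 with ⟨u, hu, h⟩
      have hv4 := hv3.cons (hD.trans hdb hu)
      rcases sat_ex.mp h with ⟨q, hdq, h⟩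
      have hv5 := hv4.cons hdq
      have h'' := sat_and.mp h
      have hq : q = opair a u := (sat_pairF hD hv5).mp h''.1
      have hz : v zv = opair (natZ 1) q := (sat_tagF hD hv5 (by norm_num)).mp h''.2
      exact ⟨p, hp, a, b, hpab, u, hu, by rw [hz, hq]⟩
    · right; right
      have hdp : D p := hD.trans (hv iv) hp
      have hv1 := hv.cons hdp
      rcases sat_ex.mp h with ⟨a, hda, h⟩
      have hv2 := hv1.cons hda
      rcases sat_ex.mp h with ⟨b, hdb, h⟩
      have hv3 := hv2.cons hdb
      have h' := sat_and.mp h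
      have hpab : p = opair a b := (sat_pairF hD hv3).mp h'.1
      have hz : v zv = opair (natZ 2) a := (sat_tagF hD hv3 (by norm_num)).mp h'.2
      exact ⟨p, hp, a, b, hpab, hz⟩
  · rintro (⟨a, ha, hz⟩ | ⟨p, hp, a, b, hpab, u, hu, hz⟩ | ⟨p, hp, a, b, hpab, hz⟩)
    · left
      have hda : D a := hD.trans (hv uv) ha
      exact ⟨a, ha, (sat_tagF hD (hv.cons hda) (by norm_num)).mpr hz⟩
    · right; left
      have hdp : D p := hD.trans (hv iv) hp
      have hdab : D (opair a b) := hpab ▸ hdp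
      have hda : D a := hD.opair_left hdab
      have hdb : D b := hD.opair_right hdab
      have hdu : D u := hD.trans hdb hu
      have hdq : D (opair a u) := hD.opair hda hdu
      have hv1 := hv.cons hdp
      have hv2 := hv1.cons hda
      have hv3 := hv2.cons hdb
      have hv4 := hv3.cons hdu
      have hv5 := hv4.cons hdq
      refine ⟨p, hp, sat_ex.mpr ⟨a, hda, sat_ex.mpr ⟨b, hdb, sat_and.mpr
        ⟨(sat_pairF hD hv3).mpr hpab, (sat_bexF hD hv3).mpr
          ⟨u, hu, sat_ex.mpr ⟨opair a u, hdq, sat_and.mpr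
            ⟨(sat_pairF hD hv5).mpr rfl, (sat_tagF hD hv5 (by norm_num)).mpr hz⟩⟩⟩⟩⟩⟩⟩
    · right; right
      have hdp : D p := hD.trans (hv iv) hp
      have hdab : D (opair a b) := hpab ▸ hdp
      have hda : D a := hD.opair_left hdab
      have hdb : D b := hD.opair_right hdab
      have hv1 := hv.cons hdp
      have hv2 := hv1.cons hda
      have hv3 := hv2.cons hdb
      exact ⟨p, hp, sat_ex.mpr ⟨a, hda, sat_ex.mpr ⟨b, hdb, sat_and.mpr
        ⟨(sat_pairF hD hv3).mpr hpab, (sat_tagF hD hv3 (by norm_num)).mpr hz⟩⟩⟩⟩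


end Aux4
end SmallExt

namespace SmallExt
section Aux4B
variable {D : ZFSet → Prop} {v : ℕ → ZFSet}
/-- semantic language-fragment membership. -/
def δsem (z t : ZFSet) : Prop :=
  (∃ a, βsem a t ∧ z = opair (natZ 0) a) ∨
  (∃ a u, βsem a t ∧ βsem u t ∧ z = opair (natZ 1) (opair a u)) ∨
  (∃ a, βsem a t ∧ z = opair (natZ 2) a)

lemma GoodDom.deltaD {D} (h : GoodDom D) {z t : ZFSet} (ht : D t) (hd : δsem z t) : D z := by
  rcases hd with ⟨a, hb, rfl⟩ | ⟨a, u, hb1, hb2, rfl⟩ | ⟨a, hb, rfl⟩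
  · exact h.opair h.nat0 (h.beta ht hb)
  · exact h.opair h.nat1 (h.opair (h.beta ht hb1) (h.beta ht hb2))
  · exact h.opair h.nat2 (h.beta ht hb)

/-- the formula for `δsem (var zv) (var tv)`. -/
def δF (zv tv : ℕ) : Fm :=
  Fm.or (Fm.ex (Fm.and (betaF 0 (tv + 1)) (tagF 0 (zv + 1) 0)))
    (Fm.or
      (Fm.ex (Fm.ex (Fm.and (betaF 1 (tv + 2)) (Fm.and (betaF 0 (tv + 2))
        (Fm.ex (Fm.and (pairF 0 2 1) (tagF 1 (zv + 3) 0)))))))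
      (Fm.ex (Fm.and (betaF 0 (tv + 1)) (tagF 2 (zv + 1) 0))))

lemma sat_δF (hD : GoodDom D) (hv : VOK D v) {zv tv : ℕ} :
    SatD D (δF zv tv) v ↔ δsem (v zv) (v tv) := by
  rw [δF, sat_or, sat_or]
  constructor
  · rintro (h | h | h)
    · left
      rcases sat_ex.mp h with ⟨a, hda, h⟩
      have hv1 := hv.cons hda
      have h' := sat_and.mp h
      exact ⟨a, (sat_betaF hD hv1).mp h'.1, (sat_tagF hD hv1 (by norm_num)).mp h'.2⟩
    · right; left
      rcases sat_ex.mp h with ⟨a, hda, h⟩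
      have hv1 := hv.cons hda
      rcases sat_ex.mp h with ⟨u, hdu, h⟩
      have hv2 := hv1.cons hdu
      have h' := sat_and.mp h
      have hb1 : βsem a (v tv) := (sat_betaF hD hv2).mp h'.1
      have h'' := sat_and.mp h'.2
      have hb2 : βsem u (v tv) := (sat_betaF hD hv2).mp h''.1
      rcases sat_ex.mp h''.2 with ⟨q, hdq, h⟩
      have hv3 := hv2.cons hdq
      have h3 := sat_and.mp h
      have hq : q = opair a u := (sat_pairF hD hv3).mp h3.1
      have hz : v zv = opair (natZ 1) q := (sat_tagF hD hv3 (by norm_num)).mp h3.2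
      exact ⟨a, u, hb1, hb2, by rw [hz, hq]⟩
    · right; right
      rcases sat_ex.mp h with ⟨a, hda, h⟩
      have hv1 := hv.cons hda
      have h' := sat_and.mp h
      exact ⟨a, (sat_betaF hD hv1).mp h'.1, (sat_tagF hD hv1 (by norm_num)).mp h'.2⟩
  · rintro (⟨a, hb, hz⟩ | ⟨a, u, hb1, hb2, hz⟩ | ⟨a, hb, hz⟩)
    · left
      have hda : D a := hD.beta (hv tv) hb
      have hv1 := hv.cons hda
      exact sat_ex.mpr ⟨a, hda, sat_and.mpr
        ⟨(sat_betaF hD hv1).mpr hb, (sat_tagF hD hv1 (by norm_num)).mpr hz⟩⟩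
    · right; left
      have hda : D a := hD.beta (hv tv) hb1
      have hdu : D u := hD.beta (hv tv) hb2
      have hdq : D (opair a u) := hD.opair hda hdu
      have hv1 := hv.cons hda
      have hv2 := hv1.cons hdu
      have hv3 := hv2.cons hdq
      exact sat_ex.mpr ⟨a, hda, sat_ex.mpr ⟨u, hdu, sat_and.mpr
        ⟨(sat_betaF hD hv2).mpr hb1, sat_and.mpr ⟨(sat_betaF hD hv2).mpr hb2,
          sat_ex.mpr ⟨opair a u, hdq, sat_and.mpr
            ⟨(sat_pairF hD hv3).mpr rfl, (sat_tagF hD hv3 (by norm_num)).mpr hz⟩⟩⟩⟩⟩⟩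
    · right; right
      have hda : D a := hD.beta (hv tv) hb
      have hv1 := hv.cons hda
      exact sat_ex.mpr ⟨a, hda, sat_and.mpr
        ⟨(sat_betaF hD hv1).mpr hb, (sat_tagF hD hv1 (by norm_num)).mpr hz⟩⟩

end Aux4B
end SmallExt

namespace SmallExt
section Aux5
variable {D : ZFSet → Prop} {v : ℕ → ZFSet}

/-- `opair (var a) (var b) ∈ var i`. -/
def pmemF (a b i : ℕ) : Fm := Fm.ex (Fm.and (pairF 0 (a + 1) (b + 1)) (mem2 0 (i + 1)))

lemma sat_pmemF (hD : GoodDom D) (hv : VOK D v) {a b i : ℕ} :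
    SatD D (pmemF a b i) v ↔ opair (v a) (v b) ∈ v i := by
  rw [pmemF, sat_ex]
  constructor
  · rintro ⟨q, hdq, h⟩
    have h' := sat_and.mp h
    have e : q = opair (v a) (v b) := (sat_pairF hD (hv.cons hdq)).mp h'.1
    have m : q ∈ v i := sat_mem2.mp h'.2
    rwa [e] at m
  · intro h
    have hdq : D (opair (v a) (v b)) := hD.opair (hv a) (hv b)
    exact ⟨_, hdq, sat_and.mpr ⟨(sat_pairF hD (hv.cons hdq)).mpr rfl, sat_mem2.mpr h⟩⟩

/-- semantic content of `ψ`. -/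
def ψsem (t M s : ZFSet) : Prop :=
  ∃ U I, M = opair U I ∧
    (∀ p ∈ I, ∃ a b, p = opair a b) ∧
    (∀ a b b', opair a b ∈ I → opair a b' ∈ I → b = b') ∧
    (∀ a ∈ U, βsem a t) ∧
    (∀ p ∈ I, ∀ a b, p = opair a b → βsem a t ∧ ∀ u ∈ b, βsem u t) ∧
    (∀ z, z ∈ s ↔ γsem z U I)

/-- the formula `ψ`; free variables `0 = t`, `1 = M`, `2 = s`;
after the two existentials, `0 = I`, `1 = U`, `2 = t`, `3 = M`, `4 = s`. -/
def ψF : Fm :=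
  Fm.ex (Fm.ex (Fm.and (pairF 3 1 0)
    (Fm.and (ballF 0 (Fm.ex (Fm.ex (pairF 2 1 0))))
      (Fm.and (Fm.all (Fm.all (Fm.all
          (Fm.imp (pmemF 2 1 3) (Fm.imp (pmemF 2 0 3) (eq2 1 0))))))
        (Fm.and (ballF 1 (betaF 0 3))
          (Fm.and (ballF 0 (Fm.all (Fm.all (Fm.imp (pairF 2 1 0)
              (Fm.and (betaF 1 5) (ballF 0 (betaF 0 6)))))))
            (Fm.all (Fm.iff (mem2 0 5) (γF 0 2 1)))))))))

lemma sat_ψF (hD : GoodDom D) (hv : VOK D v) :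
    SatD D ψF v ↔ ψsem (v 0) (v 1) (v 2) := by
  rw [ψF, sat_ex]
  constructor
  · rintro ⟨U, hdU, h⟩
    rcases sat_ex.mp h with ⟨I, hdI, h⟩
    have hv2 : VOK D (vcons I (vcons U v)) := (hv.cons hdU).cons hdI
    have h' := sat_and.mp h
    have hM : v 1 = opair U I := (sat_pairF hD hv2).mp h'.1
    have hb := sat_and.mp h'.2
    have hb2 := sat_and.mp hb.2
    have hb3 := sat_and.mp hb2.2
    have hb4 := sat_and.mp hb3.2
    refine ⟨U, I, hM, ?_, ?_, ?_, ?_, ?_⟩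
    · -- every element of I is a pair
      intro p hp
      have := (sat_ballF hD hv2).mp hb.1 p hp
      have hdp : D p := hD.trans hdI hp
      have hv3 := hv2.cons hdp
      rcases sat_ex.mp this with ⟨a, hda, h1⟩
      rcases sat_ex.mp h1 with ⟨b, hdb, h2⟩
      have : p = opair a b := (sat_pairF hD ((hv3.cons hda).cons hdb)).mp h2
      exact ⟨a, b, this⟩
    · -- functionality
      intro a b b' m1 m2
      have hdab : D (opair a b) := hD.trans hdI m1
      have hdab' : D (opair a b') := hD.trans hdI m2
      have hda : D a := hD.opair_left hdab
      have hdb : D b := hD.opair_right hdab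
      have hdb' : D b' := hD.opair_right hdab'
      have h1 := sat_all.mp hb2.1 a hda
      have h2 := sat_all.mp h1 b hdb
      have h3 := sat_all.mp h2 b' hdb'
      have hv5 := ((hv2.cons hda).cons hdb).cons hdb'
      have h4 := sat_imp.mp h3 ((sat_pmemF hD hv5).mpr m1)
      have h5 := sat_imp.mp h4 ((sat_pmemF hD hv5).mpr m2)
      exact sat_eq2.mp h5
    · -- universe bound
      intro a ha
      have hda : D a := hD.trans hdU ha
      exact (sat_betaF hD (hv2.cons hda)).mp ((sat_ballF hD hv2).mp hb3.1 a ha)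
    · -- interpretation bound
      intro p hp a b hpab
      have hdp : D p := hD.trans hdI hp
      have hdab : D (opair a b) := hpab ▸ hdp
      have hda : D a := hD.opair_left hdab
      have hdb : D b := hD.opair_right hdab
      have h1 := (sat_ballF hD hv2).mp hb4.1 p hp
      have h2 := sat_all.mp h1 a hda
      have h3 := sat_all.mp h2 b hdb
      have hv5 := ((hv2.cons hdp).cons hda).cons hdb
      have h4 := sat_imp.mp h3 ((sat_pairF hD hv5).mpr hpab)
      have h5 := sat_and.mp h4
      refine ⟨(sat_betaF hD hv5).mp h5.1, fun u hu => ?_⟩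
      have hdu : D u := hD.trans hdb hu
      exact (sat_betaF hD (hv5.cons hdu)).mp ((sat_ballF hD hv5).mp h5.2 u hu)
    · -- diagram characterization
      intro z
      constructor
      · intro hz
        have hdz : D z := hD.trans (hv 2) hz
        have h1 := sat_all.mp hb4.2 z hdz
        have h2 := (sat_iff.mp h1).mp (sat_mem2.mpr hz)
        exact (sat_γF hD (hv2.cons hdz)).mp h2
      · intro hg
        have hdz : D z := hD.gammaD hdU hdI hg
        have h1 := sat_all.mp hb4.2 z hdz
        exact sat_mem2.mp ((sat_iff.mp h1).mpr ((sat_γF hD (hv2.cons hdz)).mpr hg))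
  · rintro ⟨U, I, hM, hpair, hfun, hUb, hIb, hdiag⟩
    have hdM : D (opair U I) := hM ▸ hv 1
    have hdU : D U := hD.opair_left hdM
    have hdI : D I := hD.opair_right hdM
    have hv2 : VOK D (vcons I (vcons U v)) := (hv.cons hdU).cons hdI
    refine ⟨U, hdU, sat_ex.mpr ⟨I, hdI, sat_and.mpr ⟨(sat_pairF hD hv2).mpr hM,
      sat_and.mpr ⟨?_, sat_and.mpr ⟨?_, sat_and.mpr ⟨?_, sat_and.mpr ⟨?_, ?_⟩⟩⟩⟩⟩⟩⟩
    · refine (sat_ballF hD hv2).mpr fun p hp => ?_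
      have hdp : D p := hD.trans hdI hp
      have hv3 := hv2.cons hdp
      rcases hpair p hp with ⟨a, b, hab⟩
      have hdab : D (opair a b) := hab ▸ hdp
      have hda : D a := hD.opair_left hdab
      have hdb : D b := hD.opair_right hdab
      exact sat_ex.mpr ⟨a, hda, sat_ex.mpr ⟨b, hdb,
        (sat_pairF hD ((hv3.cons hda).cons hdb)).mpr hab⟩⟩
    · refine sat_all.mpr fun a hda => sat_all.mpr fun b hdb => sat_all.mpr fun b' hdb' => ?_
      have hv5 := ((hv2.cons hda).cons hdb).cons hdb'
      refine sat_imp.mpr fun m1 => sat_imp.mpr fun m2 => sat_eq2.mpr ?_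
      exact hfun a b b' ((sat_pmemF hD hv5).mp m1) ((sat_pmemF hD hv5).mp m2)
    · refine (sat_ballF hD hv2).mpr fun a ha => ?_
      have hda : D a := hD.trans hdU ha
      exact (sat_betaF hD (hv2.cons hda)).mpr (hUb a ha)
    · refine (sat_ballF hD hv2).mpr fun p hp => ?_
      have hdp : D p := hD.trans hdI hp
      refine sat_all.mpr fun a hda => sat_all.mpr fun b hdb => sat_imp.mpr fun hp' => ?_
      have hv5 := ((hv2.cons hdp).cons hda).cons hdb
      have hpab : p = opair a b := (sat_pairF hD hv5).mp hp'
      rcases hIb p hp a b hpab with ⟨h1, h2⟩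
      refine sat_and.mpr ⟨(sat_betaF hD hv5).mpr h1, (sat_ballF hD hv5).mpr fun u hu => ?_⟩
      exact (sat_betaF hD (hv5.cons (hD.trans hdb hu))).mpr (h2 u hu)
    · refine sat_all.mpr fun z hdz => sat_iff.mpr ?_
      have hv3 := hv2.cons hdz
      constructor
      · intro hz
        exact (sat_γF hD hv3).mpr ((hdiag z).mp (sat_mem2.mp hz))
      · intro hg
        exact sat_mem2.mpr ((hdiag z).mpr ((sat_γF hD hv3).mp hg))

/-- semantic content of `φ`. -/
def φsem (t L : ZFSet) : Prop := ∀ z, z ∈ L ↔ δsem z t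

/-- the formula `φ`; free variables `0 = t`, `1 = L`. -/
def φF : Fm := Fm.all (Fm.iff (mem2 0 2) (δF 0 1))

lemma sat_φF (hD : GoodDom D) (hv : VOK D v) :
    SatD D φF v ↔ φsem (v 0) (v 1) := by
  rw [φF]
  constructor
  · intro h z
    constructor
    · intro hz
      have hdz : D z := hD.trans (hv 1) hz
      exact (sat_δF hD (hv.cons hdz)).mp
        ((sat_iff.mp (sat_all.mp h z hdz)).mp (sat_mem2.mpr hz))
    · intro hd
      have hdz : D z := hD.deltaD (hv 0) hd
      exact sat_mem2.mp ((sat_iff.mp (sat_all.mp h z hdz)).mpr ((sat_δF hD (hv.cons hdz)).mpr hd))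
  · intro h
    refine sat_all.mpr fun z hdz => sat_iff.mpr ?_
    constructor
    · intro hz
      exact (sat_δF hD (hv.cons hdz)).mpr ((h z).mp (sat_mem2.mp hz))
    · intro hd
      exact sat_mem2.mpr ((h z).mpr ((sat_δF hD (hv.cons hdz)).mp hd))

end Aux5
end SmallExt

namespace SmallExt
section Aux6

/-! memOnly -/

lemma mo_mem2 {i j : ℕ} : Fm.memOnly (mem2 i j) :=
  ⟨rfl, rfl, fun k => by fin_cases k <;> trivial⟩

lemma mo_eq2 {i j : ℕ} : Fm.memOnly (eq2 i j) := ⟨trivial, trivial⟩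

lemma mo_not {f} (hf : Fm.memOnly f) : Fm.memOnly (Fm.not f) := hf
lemma mo_imp {f g} (hf : Fm.memOnly f) (hg : Fm.memOnly g) : Fm.memOnly (Fm.imp f g) := ⟨hf, hg⟩
lemma mo_and {f g} (hf : Fm.memOnly f) (hg : Fm.memOnly g) : Fm.memOnly (Fm.and f g) := ⟨hf, hg⟩
lemma mo_or {f g} (hf : Fm.memOnly f) (hg : Fm.memOnly g) : Fm.memOnly (Fm.or f g) := ⟨hf, hg⟩
lemma mo_iff {f g} (hf : Fm.memOnly f) (hg : Fm.memOnly g) : Fm.memOnly (Fm.iff f g) :=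
  ⟨⟨hf, hg⟩, hg, hf⟩
lemma mo_all {f} (hf : Fm.memOnly f) : Fm.memOnly (Fm.all f) := hf
lemma mo_ex {f} (hf : Fm.memOnly f) : Fm.memOnly (Fm.ex f) := hf

lemma mo_bexF {j f} (hf : Fm.memOnly f) : Fm.memOnly (bexF j f) := mo_ex (mo_and mo_mem2 hf)
lemma mo_ballF {j f} (hf : Fm.memOnly f) : Fm.memOnly (ballF j f) := mo_all (mo_imp mo_mem2 hf)
lemma mo_empF {e} : Fm.memOnly (empF e) := mo_all (mo_not mo_mem2)
lemma mo_sglF {w a} : Fm.memOnly (sglF w a) := mo_and mo_mem2 (mo_ballF mo_eq2)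
lemma mo_uprF {w a b} : Fm.memOnly (uprF w a b) :=
  mo_and mo_mem2 (mo_and mo_mem2 (mo_ballF (mo_or mo_eq2 mo_eq2)))
lemma mo_pairF {p a b} : Fm.memOnly (pairF p a b) :=
  mo_and (mo_ex (mo_and mo_sglF mo_mem2))
    (mo_and (mo_ex (mo_and mo_uprF mo_mem2)) (mo_ballF (mo_or mo_sglF mo_uprF)))
lemma mo_oneF {c} : Fm.memOnly (oneF c) := mo_and (mo_bexF mo_empF) (mo_ballF mo_empF)
lemma mo_twoF {c} : Fm.memOnly (twoF c) :=
  mo_and (mo_bexF mo_empF) (mo_and (mo_bexF mo_oneF) (mo_ballF (mo_or mo_empF mo_oneF)))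
lemma mo_natF {k c} : Fm.memOnly (natF k c) := by
  unfold natF
  split
  · exact mo_empF
  · split
    · exact mo_oneF
    · exact mo_twoF
lemma mo_tagF {k p a} : Fm.memOnly (tagF k p a) := mo_ex (mo_and mo_natF mo_pairF)
lemma mo_memIterF : ∀ {k i j}, Fm.memOnly (memIterF k i j) := by
  intro k
  induction k with
  | zero => exact fun {i j} => mo_mem2
  | succ k ih => exact fun {i j} => mo_ex (mo_and ih mo_mem2)
lemma mo_uptoF : ∀ {k i j}, Fm.memOnly (uptoF k i j) := by
  intro k
  induction k with
  | zero => exact fun {i j} => mo_mem2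
  | succ k ih => exact fun {i j} => mo_or ih mo_memIterF
lemma mo_betaF {i j} : Fm.memOnly (betaF i j) := mo_uptoF
lemma mo_γF {zv uv iv} : Fm.memOnly (γF zv uv iv) :=
  mo_or (mo_bexF mo_tagF)
    (mo_or (mo_bexF (mo_ex (mo_ex (mo_and mo_pairF
        (mo_bexF (mo_ex (mo_and mo_pairF mo_tagF)))))))
      (mo_bexF (mo_ex (mo_ex (mo_and mo_pairF mo_tagF)))))
lemma mo_δF {zv tv} : Fm.memOnly (δF zv tv) :=
  mo_or (mo_ex (mo_and mo_betaF mo_tagF))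
    (mo_or (mo_ex (mo_ex (mo_and mo_betaF (mo_and mo_betaF
        (mo_ex (mo_and mo_pairF mo_tagF))))))
      (mo_ex (mo_and mo_betaF mo_tagF)))
lemma mo_pmemF {a b i} : Fm.memOnly (pmemF a b i) := mo_ex (mo_and mo_pairF mo_mem2)
lemma mo_ψF : Fm.memOnly ψF :=
  mo_ex (mo_ex (mo_and mo_pairF
    (mo_and (mo_ballF (mo_ex (mo_ex mo_pairF)))
      (mo_and (mo_all (mo_all (mo_all (mo_imp mo_pmemF (mo_imp mo_pmemF mo_eq2)))))
        (mo_and (mo_ballF mo_betaF)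
          (mo_and (mo_ballF (mo_all (mo_all (mo_imp mo_pairF
              (mo_and mo_betaF (mo_ballF mo_betaF))))))
            (mo_all (mo_iff mo_mem2 mo_γF))))))))
lemma mo_φF : Fm.memOnly φF := mo_all (mo_iff mo_mem2 mo_δF)

/-! paramSet -/

lemma ps_mem2 {i j : ℕ} : Fm.paramSet (mem2 i j) = ∅ := by
  ext b
  simp only [Fm.paramSet, Set.mem_setOf_eq, Set.mem_empty_iff_false, iff_false, not_exists]
  intro k
  simp [mem2, Fm.paramSet, Tm.paramSet, Fin.exists_fin_two] at k

lemma ps_eq2 {i j : ℕ} : Fm.paramSet (eq2 i j) = ∅ := by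
  show Tm.paramSet (Tm.var i) ∪ Tm.paramSet (Tm.var j) = ∅
  simp [Tm.paramSet]

lemma ps_not {f} (hf : Fm.paramSet f = ∅) : Fm.paramSet (Fm.not f) = ∅ := hf
lemma ps_imp {f g} (hf : Fm.paramSet f = ∅) (hg : Fm.paramSet g = ∅) :
    Fm.paramSet (Fm.imp f g) = ∅ := by
  show Fm.paramSet f ∪ Fm.paramSet g = ∅
  rw [hf, hg]; simp
lemma ps_and {f g} (hf : Fm.paramSet f = ∅) (hg : Fm.paramSet g = ∅) :
    Fm.paramSet (Fm.and f g) = ∅ := ps_not (ps_imp hf (ps_not hg))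
lemma ps_or {f g} (hf : Fm.paramSet f = ∅) (hg : Fm.paramSet g = ∅) :
    Fm.paramSet (Fm.or f g) = ∅ := ps_imp (ps_not hf) hg
lemma ps_iff {f g} (hf : Fm.paramSet f = ∅) (hg : Fm.paramSet g = ∅) :
    Fm.paramSet (Fm.iff f g) = ∅ := ps_and (ps_imp hf hg) (ps_imp hg hf)
lemma ps_all {f} (hf : Fm.paramSet f = ∅) : Fm.paramSet (Fm.all f) = ∅ := hf
lemma ps_ex {f} (hf : Fm.paramSet f = ∅) : Fm.paramSet (Fm.ex f) = ∅ := hf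

lemma ps_bexF {j f} (hf : Fm.paramSet f = ∅) : Fm.paramSet (bexF j f) = ∅ :=
  ps_ex (ps_and ps_mem2 hf)
lemma ps_ballF {j f} (hf : Fm.paramSet f = ∅) : Fm.paramSet (ballF j f) = ∅ :=
  ps_all (ps_imp ps_mem2 hf)
lemma ps_empF {e} : Fm.paramSet (empF e) = ∅ := ps_all (ps_not ps_mem2)
lemma ps_sglF {w a} : Fm.paramSet (sglF w a) = ∅ := ps_and ps_mem2 (ps_ballF ps_eq2)
lemma ps_uprF {w a b} : Fm.paramSet (uprF w a b) = ∅ :=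
  ps_and ps_mem2 (ps_and ps_mem2 (ps_ballF (ps_or ps_eq2 ps_eq2)))
lemma ps_pairF {p a b} : Fm.paramSet (pairF p a b) = ∅ :=
  ps_and (ps_ex (ps_and ps_sglF ps_mem2))
    (ps_and (ps_ex (ps_and ps_uprF ps_mem2)) (ps_ballF (ps_or ps_sglF ps_uprF)))
lemma ps_oneF {c} : Fm.paramSet (oneF c) = ∅ := ps_and (ps_bexF ps_empF) (ps_ballF ps_empF)
lemma ps_twoF {c} : Fm.paramSet (twoF c) = ∅ :=
  ps_and (ps_bexF ps_empF) (ps_and (ps_bexF ps_oneF) (ps_ballF (ps_or ps_empF ps_oneF)))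
lemma ps_natF {k c} : Fm.paramSet (natF k c) = ∅ := by
  unfold natF
  split
  · exact ps_empF
  · split
    · exact ps_oneF
    · exact ps_twoF
lemma ps_tagF {k p a} : Fm.paramSet (tagF k p a) = ∅ := ps_ex (ps_and ps_natF ps_pairF)
lemma ps_memIterF : ∀ {k i j}, Fm.paramSet (memIterF k i j) = ∅ := by
  intro k
  induction k with
  | zero => exact fun {i j} => ps_mem2
  | succ k ih => exact fun {i j} => ps_ex (ps_and ih ps_mem2)
lemma ps_uptoF : ∀ {k i j}, Fm.paramSet (uptoF k i j) = ∅ := by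
  intro k
  induction k with
  | zero => exact fun {i j} => ps_mem2
  | succ k ih => exact fun {i j} => ps_or ih ps_memIterF
lemma ps_betaF {i j} : Fm.paramSet (betaF i j) = ∅ := ps_uptoF
lemma ps_γF {zv uv iv} : Fm.paramSet (γF zv uv iv) = ∅ :=
  ps_or (ps_bexF ps_tagF)
    (ps_or (ps_bexF (ps_ex (ps_ex (ps_and ps_pairF
        (ps_bexF (ps_ex (ps_and ps_pairF ps_tagF)))))))
      (ps_bexF (ps_ex (ps_ex (ps_and ps_pairF ps_tagF)))))
lemma ps_δF {zv tv} : Fm.paramSet (δF zv tv) = ∅ :=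
  ps_or (ps_ex (ps_and ps_betaF ps_tagF))
    (ps_or (ps_ex (ps_ex (ps_and ps_betaF (ps_and ps_betaF
        (ps_ex (ps_and ps_pairF ps_tagF))))))
      (ps_ex (ps_and ps_betaF ps_tagF)))
lemma ps_pmemF {a b i} : Fm.paramSet (pmemF a b i) = ∅ := ps_ex (ps_and ps_pairF ps_mem2)
lemma ps_ψF : Fm.paramSet ψF = ∅ :=
  ps_ex (ps_ex (ps_and ps_pairF
    (ps_and (ps_ballF (ps_ex (ps_ex ps_pairF)))
      (ps_and (ps_all (ps_all (ps_all (ps_imp ps_pmemF (ps_imp ps_pmemF ps_eq2)))))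
        (ps_and (ps_ballF ps_betaF)
          (ps_and (ps_ballF (ps_all (ps_all (ps_imp ps_pairF
              (ps_and ps_betaF (ps_ballF ps_betaF))))))
            (ps_all (ps_iff ps_mem2 ps_γF))))))))
lemma ps_φF : Fm.paramSet φF = ∅ := ps_all (ps_iff ps_mem2 ps_δF)

/-! free variable bounds -/

def FVB (f : Fm) (n : ℕ) : Prop := ∀ m ∈ Fm.free f, m < n

lemma fv_mem2 {i j n : ℕ} (hi : i < n) (hj : j < n) : FVB (mem2 i j) n := by
  intro m hm
  rcases hm with ⟨k, hk⟩
  fin_cases k <;> simp [Tm.free] at hk <;> omega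

lemma fv_eq2 {i j n : ℕ} (hi : i < n) (hj : j < n) : FVB (eq2 i j) n := by
  intro m hm
  rcases hm with hm | hm <;> simp [Tm.free] at hm <;> omega

lemma fv_not {f n} (hf : FVB f n) : FVB (Fm.not f) n := hf
lemma fv_imp {f g n} (hf : FVB f n) (hg : FVB g n) : FVB (Fm.imp f g) n := by
  intro m hm
  rcases hm with hm | hm
  · exact hf m hm
  · exact hg m hm
lemma fv_and {f g n} (hf : FVB f n) (hg : FVB g n) : FVB (Fm.and f g) n :=
  fv_not (fv_imp hf (fv_not hg))
lemma fv_or {f g n} (hf : FVB f n) (hg : FVB g n) : FVB (Fm.or f g) n :=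
  fv_imp (fv_not hf) hg
lemma fv_iff {f g n} (hf : FVB f n) (hg : FVB g n) : FVB (Fm.iff f g) n :=
  fv_and (fv_imp hf hg) (fv_imp hg hf)
lemma fv_all {f n} (hf : FVB f (n + 1)) : FVB (Fm.all f) n := by
  intro m hm
  have := hf (m + 1) hm
  omega
lemma fv_ex {f n} (hf : FVB f (n + 1)) : FVB (Fm.ex f) n := by
  intro m hm
  have := hf (m + 1) hm
  omega

lemma fv_bexF {j f n} (hj : j < n) (hf : FVB f (n + 1)) : FVB (bexF j f) n :=
  fv_ex (fv_and (fv_mem2 (by omega) (by omega)) hf)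
lemma fv_ballF {j f n} (hj : j < n) (hf : FVB f (n + 1)) : FVB (ballF j f) n :=
  fv_all (fv_imp (fv_mem2 (by omega) (by omega)) hf)
lemma fv_empF {e n} (he : e < n) : FVB (empF e) n :=
  fv_all (fv_not (fv_mem2 (by omega) (by omega)))
lemma fv_sglF {w a n} (hw : w < n) (ha : a < n) : FVB (sglF w a) n :=
  fv_and (fv_mem2 ha hw) (fv_ballF hw (fv_eq2 (by omega) (by omega)))
lemma fv_uprF {w a b n} (hw : w < n) (ha : a < n) (hb : b < n) : FVB (uprF w a b) n :=
  fv_and (fv_mem2 ha hw) (fv_and (fv_mem2 hb hw)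
    (fv_ballF hw (fv_or (fv_eq2 (by omega) (by omega)) (fv_eq2 (by omega) (by omega)))))
lemma fv_pairF {p a b n} (hp : p < n) (ha : a < n) (hb : b < n) : FVB (pairF p a b) n :=
  fv_and (fv_ex (fv_and (fv_sglF (by omega) (by omega)) (fv_mem2 (by omega) (by omega))))
    (fv_and (fv_ex (fv_and (fv_uprF (by omega) (by omega) (by omega))
        (fv_mem2 (by omega) (by omega))))
      (fv_ballF hp (fv_or (fv_sglF (by omega) (by omega))
        (fv_uprF (by omega) (by omega) (by omega)))))
lemma fv_oneF {c n} (hc : c < n) : FVB (oneF c) n :=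
  fv_and (fv_bexF hc (fv_empF (by omega))) (fv_ballF hc (fv_empF (by omega)))
lemma fv_twoF {c n} (hc : c < n) : FVB (twoF c) n :=
  fv_and (fv_bexF hc (fv_empF (by omega)))
    (fv_and (fv_bexF hc (fv_oneF (by omega)))
      (fv_ballF hc (fv_or (fv_empF (by omega)) (fv_oneF (by omega)))))
lemma fv_natF {k c n} (hc : c < n) : FVB (natF k c) n := by
  unfold natF
  split
  · exact fv_empF hc
  · split
    · exact fv_oneF hc
    · exact fv_twoF hc
lemma fv_tagF {k p a n} (hp : p < n) (ha : a < n) : FVB (tagF k p a) n :=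
  fv_ex (fv_and (fv_natF (by omega)) (fv_pairF (by omega) (by omega) (by omega)))
lemma fv_memIterF : ∀ (k : ℕ) {i j n}, i < n → j < n → FVB (memIterF k i j) n := by
  intro k
  induction k with
  | zero => exact fun {i j n} hi hj => fv_mem2 hi hj
  | succ k ih =>
    intro i j n hi hj
    exact fv_ex (fv_and (ih (by omega) (by omega)) (fv_mem2 (by omega) (by omega)))
lemma fv_uptoF : ∀ (k : ℕ) {i j n}, i < n → j < n → FVB (uptoF k i j) n := by
  intro k
  induction k with
  | zero => exact fun {i j n} hi hj => fv_mem2 hi hj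
  | succ k ih =>
    intro i j n hi hj
    exact fv_or (ih hi hj) (fv_memIterF (k + 1) hi hj)
lemma fv_betaF {i j n} (hi : i < n) (hj : j < n) : FVB (betaF i j) n := fv_uptoF 12 hi hj
lemma fv_γF {zv uv iv n} (hz : zv < n) (hu : uv < n) (hi : iv < n) : FVB (γF zv uv iv) n :=
  fv_or (fv_bexF hu (fv_tagF (by omega) (by omega)))
    (fv_or
      (fv_bexF hi (fv_ex (fv_ex (fv_and (fv_pairF (by omega) (by omega) (by omega))
        (fv_bexF (by omega) (fv_ex (fv_and (fv_pairF (by omega) (by omega) (by omega))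
          (fv_tagF (by omega) (by omega)))))))))
      (fv_bexF hi (fv_ex (fv_ex (fv_and (fv_pairF (by omega) (by omega) (by omega))
        (fv_tagF (by omega) (by omega)))))))
lemma fv_δF {zv tv n} (hz : zv < n) (ht : tv < n) : FVB (δF zv tv) n :=
  fv_or (fv_ex (fv_and (fv_betaF (by omega) (by omega)) (fv_tagF (by omega) (by omega))))
    (fv_or
      (fv_ex (fv_ex (fv_and (fv_betaF (by omega) (by omega))
        (fv_and (fv_betaF (by omega) (by omega))
          (fv_ex (fv_and (fv_pairF (by omega) (by omega) (by omega))
            (fv_tagF (by omega) (by omega))))))))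
      (fv_ex (fv_and (fv_betaF (by omega) (by omega)) (fv_tagF (by omega) (by omega)))))
lemma fv_pmemF {a b i n} (ha : a < n) (hb : b < n) (hi : i < n) : FVB (pmemF a b i) n :=
  fv_ex (fv_and (fv_pairF (by omega) (by omega) (by omega)) (fv_mem2 (by omega) (by omega)))
lemma fv_ψF : FVB ψF 3 :=
  fv_ex (fv_ex (fv_and (fv_pairF (by omega) (by omega) (by omega))
    (fv_and (fv_ballF (by omega) (fv_ex (fv_ex (fv_pairF (by omega) (by omega) (by omega)))))
      (fv_and (fv_all (fv_all (fv_all (fv_imp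
          (fv_pmemF (by omega) (by omega) (by omega))
          (fv_imp (fv_pmemF (by omega) (by omega) (by omega)) (fv_eq2 (by omega) (by omega)))))))
        (fv_and (fv_ballF (by omega) (fv_betaF (by omega) (by omega)))
          (fv_and (fv_ballF (by omega) (fv_all (fv_all (fv_imp
              (fv_pairF (by omega) (by omega) (by omega))
              (fv_and (fv_betaF (by omega) (by omega))
                (fv_ballF (by omega) (fv_betaF (by omega) (by omega))))))))
            (fv_all (fv_iff (fv_mem2 (by omega) (by omega))
              (fv_γF (by omega) (by omega) (by omega))))))))))
lemma fv_φF : FVB φF 2 :=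
  fv_all (fv_iff (fv_mem2 (by omega) (by omega)) (fv_δF (by omega) (by omega)))

lemma free_φF : Fm.free φF ⊆ {0, 1} := by
  intro m hm
  have := fv_φF m hm
  interval_cases m <;> simp

lemma free_ψF : Fm.free ψF ⊆ {0, 1, 2} := by
  intro m hm
  have := fv_ψF m hm
  interval_cases m <;> simp

end Aux6
end SmallExt

namespace SmallExt
section Aux7

lemma satD_of_satV {W : ZFSet} {f : Fm} {v : ℕ → ZFSet} (h : SatV W f v) :
    SatD (· ∈ W) f v := h

/-- a transitive model of ZFC contains the empty set. -/
lemma transModel_empty {W : ZFSet} (hW : IsTransModel W) : ∅ ∈ W := by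
  obtain ⟨htr, hzfc⟩ := hW
  -- some element of W, from infinity
  have hinf : SatD (· ∈ W) infAx (fun _ => ∅) := hzfc infAx (by simp [ZFCax])
  rw [infAx, sat_ex] at hinf
  obtain ⟨x0, hx0, -⟩ := hinf
  -- separation with a false condition
  have hsep : SatD (· ∈ W) (sepBody (Fm.not (eq2 0 0))) (fun _ => ∅) := by
    refine hzfc _ (Or.inl (Or.inr ⟨0, Fm.not (eq2 0 0), ?_, ?_, ?_, rfl⟩))
    · exact mo_not mo_eq2
    · exact ps_not ps_eq2
    · intro h
      rcases h with h | h <;> simp [Tm.free] at h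
  rw [sepBody] at hsep
  have h1 := sat_all.mp hsep x0 hx0
  rcases sat_ex.mp h1 with ⟨S, hS, h2⟩
  have hSempty : S = ∅ := by
    ext z
    simp only [ZFSet.notMem_empty, iff_false]
    intro hz
    have hzW : z ∈ W := htr S hS hz
    have h3 := sat_all.mp h2 z hzW
    have h4 := (sat_iff.mp h3).mp (sat_mem2.mpr hz)
    have h5 := sat_and.mp h4
    exact sat_not.mp h5.2 (sat_eq2.mpr rfl)
  rwa [hSempty] at hS

/-- a transitive model of ZFC is closed under unordered pairs. -/
lemma transModel_upair {W : ZFSet} (hW : IsTransModel W) {a b : ZFSet}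
    (ha : a ∈ W) (hb : b ∈ W) : ({a, b} : ZFSet) ∈ W := by
  obtain ⟨htr, hzfc⟩ := hW
  have hpair : SatD (· ∈ W) pairAx (fun _ => ∅) := hzfc pairAx (by simp [ZFCax])
  rw [pairAx] at hpair
  have h1 := sat_all.mp hpair a ha
  have h2 := sat_all.mp h1 b hb
  rcases sat_ex.mp h2 with ⟨c, hc, h3⟩
  have h4 := sat_and.mp h3
  have hac : a ∈ c := sat_mem2.mp h4.1
  have hbc : b ∈ c := sat_mem2.mp h4.2
  -- separation to cut out exactly {a, b}
  have hsep : SatD (· ∈ W) (allClose 2 (sepBody (Fm.or (eq2 0 3) (eq2 0 4)))) (fun _ => ∅) := by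
    refine hzfc _ (Or.inl (Or.inr ⟨2, Fm.or (eq2 0 3) (eq2 0 4), ?_, ?_, ?_, rfl⟩))
    · exact mo_imp (mo_not mo_eq2) mo_eq2
    · exact ps_imp (ps_not ps_eq2) ps_eq2
    · intro h
      rcases h with h | h
      · rcases h with h | h <;> simp [Tm.free] at h
      · rcases h with h | h <;> simp [Tm.free] at h
  have hsep' : SatD (· ∈ W) (Fm.all (Fm.all (sepBody (Fm.or (eq2 0 3) (eq2 0 4)))))
      (fun _ => ∅) := hsep
  have g1 := sat_all.mp hsep' b hb
  have g2 := sat_all.mp g1 a ha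
  rw [sepBody] at g2
  have g3 := sat_all.mp g2 c hc
  rcases sat_ex.mp g3 with ⟨S, hS, g4⟩
  have hSeq : S = ({a, b} : ZFSet) := by
    ext z
    constructor
    · intro hz
      have hzW : z ∈ W := htr S hS hz
      have g5 := sat_all.mp g4 z hzW
      have g6 := (sat_iff.mp g5).mp (sat_mem2.mpr hz)
      have g7 := sat_and.mp g6
      rcases sat_or.mp g7.2 with h | h
      · have : z = a := sat_eq2.mp h
        simp [this]
      · have : z = b := sat_eq2.mp h
        simp [this]
    · intro hz
      have hz' : z = a ∨ z = b := by simpa using hz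
      have hzW : z ∈ W := by rcases hz' with rfl | rfl <;> assumption
      have hzc : z ∈ c := by rcases hz' with rfl | rfl <;> assumption
      have g5 := sat_all.mp g4 z hzW
      refine sat_mem2.mp ((sat_iff.mp g5).mpr (sat_and.mpr ⟨sat_mem2.mpr hzc, sat_or.mpr ?_⟩))
      rcases hz' with rfl | rfl
      · exact Or.inl (sat_eq2.mpr rfl)
      · exact Or.inr (sat_eq2.mpr rfl)
  rwa [hSeq] at hS

lemma transModel_goodDom {W : ZFSet} (hW : IsTransModel W) : GoodDom (· ∈ W) :=
  ⟨fun hy hz => hW.1 _ hy hz, fun ha hb => transModel_upair hW ha hb, transModel_empty hW⟩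

end Aux7
end SmallExt

namespace SmallExt
section Aux8

lemma iapp_spec {f d s : ZFSet} (hf : IsZFunc f d) (hs : s ∈ d) : opair s (iapp f s) ∈ f :=
  Classical.epsilon_spec (hf.2 s hs).exists

lemma iapp_unique {f d s v : ZFSet} (hf : IsZFunc f d) (hs : s ∈ d)
    (h : opair s v ∈ f) : v = iapp f s := by
  obtain ⟨v', hv', huniq⟩ := hf.2 s hs
  rw [huniq v h, huniq (iapp f s) (iapp_spec hf hs)]

/-- tag distinctness -/
lemma natZ_ne_01 : natZ 0 ≠ natZ 1 := by
  intro h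
  have : (∅ : ZFSet) ∈ natZ 1 := by rw [natZ_one_eq]; simp
  rw [← h] at this
  exact ZFSet.notMem_empty _ this

lemma natZ_ne_02 : natZ 0 ≠ natZ 2 := by
  intro h
  have : (∅ : ZFSet) ∈ natZ 2 := by rw [natZ_two_eq]; simp
  rw [← h] at this
  exact ZFSet.notMem_empty _ this

lemma natZ_ne_12 : natZ 1 ≠ natZ 2 := by
  intro h
  have h1 : natZ 1 ∈ natZ 2 := by rw [natZ_two_eq]; simp
  rw [← h, natZ_one_eq] at h1
  have h2 : natZ 1 = ∅ := by rw [natZ_one_eq]; simpa using h1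
  have : (∅ : ZFSet) ∈ natZ 1 := by rw [natZ_one_eq]; simp
  rw [h2] at this
  exact ZFSet.notMem_empty _ this

/-- the set `{0, 1, 2}` of tags. -/
def threeZ : ZFSet := {natZ 0, natZ 1, natZ 2}

/-- the value `𝓛` of `φ` at `t`. -/
def Lset (t : ZFSet) : ZFSet :=
  ZFSet.sep (fun z => δsem z t)
    (ZFSet.prod threeZ (uptoS 12 t ∪ ZFSet.prod (uptoS 12 t) (uptoS 12 t)))

lemma mem_Lset {z t : ZFSet} : z ∈ Lset t ↔ δsem z t := by
  rw [Lset, ZFSet.mem_sep]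
  refine ⟨fun h => h.2, fun h => ⟨?_, h⟩⟩
  rcases h with ⟨a, hb, rfl⟩ | ⟨a, u, hb1, hb2, rfl⟩ | ⟨a, hb, rfl⟩
  · exact ZFSet.pair_mem_prod.mpr ⟨by simp [threeZ], ZFSet.mem_union.mpr (Or.inl ((beta_def _ _).mp hb))⟩
  · exact ZFSet.pair_mem_prod.mpr ⟨by simp [threeZ],
      ZFSet.mem_union.mpr (Or.inr (ZFSet.pair_mem_prod.mpr ⟨(beta_def _ _).mp hb1, (beta_def _ _).mp hb2⟩))⟩
  · exact ZFSet.pair_mem_prod.mpr ⟨by simp [threeZ], ZFSet.mem_union.mpr (Or.inl ((beta_def _ _).mp hb))⟩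

lemma phisem_Lset (t : ZFSet) : φsem t (Lset t) := fun _ => mem_Lset

lemma phisem_unique {t L L' : ZFSet} (h : φsem t L) (h' : φsem t L') : L = L' := by
  ext z
  rw [h z, h' z]

/-- the value `Σ` of `ψ` at `(t, M)` with `M = ⟨U, I⟩`. -/
def Sset (U I : ZFSet) : ZFSet :=
  ZFSet.sep (fun z => γsem z U I)
    (ZFSet.prod threeZ (U ∪ (itU 2 I ∪ ZFSet.prod (itU 2 I) (itU 3 I))))

lemma mem_itU2 {a p I : ZFSet} (hp : p ∈ I) (hap : a ∈ p) (b : ZFSet) (hb : b ∈ a) :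
    b ∈ itU 2 I := by
  rw [show (2 : ℕ) = 1 + 1 from rfl, itU_succ, itU_succ, itU_zero]
  exact ZFSet.mem_sUnion.mpr ⟨a, ZFSet.mem_sUnion.mpr ⟨p, hp, hap⟩, hb⟩

lemma mem_Sset {z U I : ZFSet} : z ∈ Sset U I ↔ γsem z U I := by
  rw [Sset, ZFSet.mem_sep]
  refine ⟨fun h => h.2, fun h => ⟨?_, h⟩⟩
  rcases h with ⟨a, ha, rfl⟩ | ⟨p, hp, a, b, hpab, u, hu, rfl⟩ | ⟨p, hp, a, b, hpab, rfl⟩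
  · exact ZFSet.pair_mem_prod.mpr ⟨by simp [threeZ], ZFSet.mem_union.mpr (Or.inl ha)⟩
  · have ha2 : a ∈ itU 2 I := mem_itU2 hp (hpab ▸ sgl_mem_opair) a (by simp)
    have hb2 : b ∈ itU 2 I := mem_itU2 hp (hpab ▸ upr_mem_opair) b (by simp)
    have hu3 : u ∈ itU 3 I := by
      rw [show (3 : ℕ) = 2 + 1 from rfl, itU_succ]
      exact ZFSet.mem_sUnion.mpr ⟨b, hb2, hu⟩
    exact ZFSet.pair_mem_prod.mpr ⟨by simp [threeZ], ZFSet.mem_union.mpr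
      (Or.inr (ZFSet.mem_union.mpr (Or.inr (ZFSet.pair_mem_prod.mpr ⟨ha2, hu3⟩))))⟩
  · have ha2 : a ∈ itU 2 I := mem_itU2 hp (hpab ▸ sgl_mem_opair) a (by simp)
    exact ZFSet.pair_mem_prod.mpr ⟨by simp [threeZ], ZFSet.mem_union.mpr
      (Or.inr (ZFSet.mem_union.mpr (Or.inl ha2)))⟩

end Aux8
end SmallExt

namespace SmallExt
section Aux9

lemma fst_mem_uptoS {x y t : ZFSet} {k : ℕ} (h : opair x y ∈ uptoS k t) :
    x ∈ uptoS (k + 2) t :=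
  mem_uptoS_step (mem_uptoS_step h sgl_mem_opair) (by simp)

lemma snd_mem_uptoS {x y t : ZFSet} {k : ℕ} (h : opair x y ∈ uptoS k t) :
    y ∈ uptoS (k + 2) t :=
  mem_uptoS_step (mem_uptoS_step h upr_mem_opair) (by simp)

lemma eq_opair_fst_uptoS1 {t x y : ZFSet} (h : t = opair x y) : x ∈ uptoS 1 t := by
  apply mem_uptoS_step (b := ({x} : ZFSet))
  · rw [uptoS_zero, h]
    exact sgl_mem_opair
  · simp

lemma eq_opair_snd_uptoS1 {t x y : ZFSet} (h : t = opair x y) : y ∈ uptoS 1 t := by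
  apply mem_uptoS_step (b := ({x, y} : ZFSet))
  · rw [uptoS_zero, h]
    exact upr_mem_opair
  · simp

lemma zfst_opair (x y : ZFSet) : zfst (opair x y) = x := by
  have hne : (opair x y).Nonempty := ⟨{x}, sgl_mem_opair⟩
  have hint : ZFSet.sInter (opair x y) = ({x} : ZFSet) := by
    ext z
    rw [ZFSet.mem_sInter hne]
    constructor
    · intro h
      exact h _ sgl_mem_opair
    · intro hz w hw
      have : w = ({x} : ZFSet) ∨ w = ({x, y} : ZFSet) := by
        rw [opair_eq_upair] at hw
        simpa using hw
      have hzx : z = x := by simpa using hz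
      rcases this with rfl | rfl <;> simp [hzx]
  rw [zfst, hint]
  ext z
  rw [ZFSet.mem_sUnion]
  simp

lemma symKind_opair (k w : ZFSet) : symKind (opair k w) = k := zfst_opair k w

/-- bound on the constraint sets of a TCI. -/
lemma theta_y_uptoS {t s' y i : ZFSet} (ht : IsTCI t)
    (hs' : s' ∈ insert (tciUdot t) (tciSig t))
    (hyi : iapp (tciTheta t) s' = opair y i) : y ∈ uptoS 10 t := by
  obtain ⟨hteq, -, -, -, -, -, hthf, -⟩ := ht
  have h1 : opair (tciSig t) (opair (tciUdot t) (tciTheta t)) ∈ uptoS 1 t :=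
    eq_opair_snd_uptoS1 hteq
  have h2 : opair (tciUdot t) (tciTheta t) ∈ uptoS 3 t := snd_mem_uptoS h1
  have h3 : tciTheta t ∈ uptoS 5 t := snd_mem_uptoS h2
  have hpr : opair s' (iapp (tciTheta t) s') ∈ tciTheta t := iapp_spec hthf hs'
  have h4 : opair s' (iapp (tciTheta t) s') ∈ uptoS 6 t := mem_uptoS_step h3 hpr
  have h5 : iapp (tciTheta t) s' ∈ uptoS 8 t := snd_mem_uptoS h4
  rw [hyi] at h5
  exact fst_mem_uptoS h5

/-- bound on the signature of a TCI. -/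
lemma sig_mem_uptoS {t s' : ZFSet} (ht : IsTCI t) (hs' : s' ∈ tciSig t) :
    s' ∈ uptoS 4 t := by
  obtain ⟨hteq, -⟩ := ht
  have h1 : opair (tciSig t) (opair (tciUdot t) (tciTheta t)) ∈ uptoS 1 t :=
    eq_opair_snd_uptoS1 hteq
  have h2 : tciSig t ∈ uptoS 3 t := fst_mem_uptoS h1
  exact mem_uptoS_step h2 hs'

lemma beta_of_upto {a t : ZFSet} {k : ℕ} (hk : k ≤ 12) (h : a ∈ uptoS k t) : βsem a t :=
  (beta_def a t).mpr (uptoS_mono hk h)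

/-- every genuine model of a TCI satisfies `ψsem` with the canonical diagram. -/
lemma models_psem {t M : ZFSet} (ht : IsTCI t) (hM : ModelsTCI M t) :
    ψsem t M (Sset (zfst M) (zsnd M)) := by
  obtain ⟨-, hMeq, hIfun, hUc, hSc, -⟩ := id hM
  obtain ⟨hteq, hsym, -, -, -, -, hthf, hthc, -⟩ := id ht
  refine ⟨zfst M, zsnd M, hMeq, ?_, ?_, ?_, ?_, fun z => mem_Sset⟩
  · intro p hp
    obtain ⟨s, v, hpv, -⟩ := hIfun.1 p hp
    exact ⟨s, v, hpv⟩
  · intro a b b' h1 h2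
    obtain ⟨s, v, hpv, hsσ⟩ := hIfun.1 _ h1
    obtain ⟨ha, -⟩ := opair_inj hpv
    rw [← ha] at hsσ
    obtain ⟨v0, -, huniq⟩ := hIfun.2 a hsσ
    rw [huniq b h1, huniq b' h2]
  · -- universe bound
    intro a ha
    have hud : tciUdot t ∈ insert (tciUdot t) (tciSig t) := ZFSet.mem_insert _ _
    obtain ⟨y, i, hyi, hi01, -⟩ := hthc _ hud
    have hsub : zfst M ⊆ y := by
      rcases hi01 with rfl | rfl
      · exact (hUc y _ hyi).1 rfl
      · intro z hz
        rw [← (hUc y _ hyi).2 rfl]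
        exact hz
    have hy : y ∈ uptoS 10 t := theta_y_uptoS ht hud hyi
    exact beta_of_upto (by norm_num) (mem_uptoS_step hy (hsub ha))
  · -- interpretation bound
    intro p hp a b hpab
    obtain ⟨s, v, hpv, hsσ⟩ := hIfun.1 p hp
    rw [hpab] at hpv
    obtain ⟨ha, hb⟩ := opair_inj hpv
    rw [← ha] at hsσ
    have hβa : βsem a t := beta_of_upto (by norm_num) (sig_mem_uptoS ht hsσ)
    refine ⟨hβa, fun u hu => ?_⟩
    -- b is the value of the interpretation at a
    have hbval : b = iapp (zsnd M) a := by
      apply iapp_unique hIfun hsσ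
      rw [← hpab]; exact hp
    have hain : a ∈ insert (tciUdot t) (tciSig t) := ZFSet.mem_insert_of_mem _ hsσ
    obtain ⟨y, i, hyi, hi01, -⟩ := hthc _ hain
    have hy : y ∈ uptoS 10 t := theta_y_uptoS ht hain hyi
    have hcon := hSc a hsσ y i hyi
    obtain ⟨k, ar, nm, haeq, hk012, -⟩ := hsym a hsσ
    have hkind : symKind a = k := by rw [haeq]; exact symKind_opair _ _
    have hmemy : u ∈ y ∨ b ∈ y := by
      rcases hk012 with rfl | rfl | rfl
      · -- relation symbol
        left
        have hsub : iapp (zsnd M) a ⊆ y ∩ ZPow (zfst M) (arityOf a) := by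
          rcases hi01 with rfl | rfl
          · exact ((hcon.1 hkind).1 rfl)
          · rw [(hcon.1 hkind).2 rfl]
        have : u ∈ y ∩ ZPow (zfst M) (arityOf a) := hsub (by rw [← hbval]; exact hu)
        exact (ZFSet.mem_inter.mp this).1
      · -- function symbol
        left
        have hsub : iapp (zsnd M) a ⊆ y ∩ ZPow (zfst M) (arityOf a + 1) := by
          rcases hi01 with rfl | rfl
          · exact ((hcon.2.1 hkind).2.1 rfl)
          · rw [(hcon.2.1 hkind).2.2 rfl]
        have : u ∈ y ∩ ZPow (zfst M) (arityOf a + 1) := hsub (by rw [← hbval]; exact hu)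
        exact (ZFSet.mem_inter.mp this).1
      · -- constant symbol
        right
        rw [hbval]
        exact (hcon.2.2 hkind).1
    rcases hmemy with h | h
    · exact beta_of_upto (by norm_num) (mem_uptoS_step hy h)
    · exact beta_of_upto (by norm_num) (mem_uptoS_step (mem_uptoS_step hy h) hu)

/-- uniqueness of the diagram. -/
lemma psem_unique {t M s s' : ZFSet} (h : ψsem t M s) (h' : ψsem t M s') : s = s' := by
  obtain ⟨U, I, hM, -, -, -, -, hd⟩ := h
  obtain ⟨U', I', hM', -, -, -, -, hd'⟩ := h'
  rw [hM] at hM'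
  obtain ⟨hU, hI⟩ := opair_inj hM'
  ext z
  rw [hd z, hd' z, hU, hI]

/-- the relation defined by `ψ` is one-one. -/
lemma psem_inj {t M M' s : ZFSet} (h : ψsem t M s) (h' : ψsem t M' s) : M = M' := by
  obtain ⟨U, I, hM, hIp, hIf, -, -, hd⟩ := h
  obtain ⟨U', I', hM', hIp', hIf', -, -, hd'⟩ := h'
  have hUU : U = U' := by
    ext a
    constructor
    · intro ha
      have : opair (natZ 0) a ∈ s := (hd _).mpr (Or.inl ⟨a, ha, rfl⟩)
      rcases (hd' _).mp this with ⟨a', ha', heq⟩ | ⟨p, hp, a', b', hpab, u, hu, heq⟩ |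
        ⟨p, hp, a', b', hpab, heq⟩
      · rw [(opair_inj heq).2]; exact ha'
      · exact absurd (opair_inj heq).1 natZ_ne_01
      · exact absurd (opair_inj heq).1 natZ_ne_02
    · intro ha
      have : opair (natZ 0) a ∈ s := (hd' _).mpr (Or.inl ⟨a, ha, rfl⟩)
      rcases (hd _).mp this with ⟨a', ha', heq⟩ | ⟨p, hp, a', b', hpab, u, hu, heq⟩ |
        ⟨p, hp, a', b', hpab, heq⟩
      · rw [(opair_inj heq).2]; exact ha'
      · exact absurd (opair_inj heq).1 natZ_ne_01
      · exact absurd (opair_inj heq).1 natZ_ne_02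
  subst hUU
  -- key: from a membership of a value-pair in one interpretation, find it in the other
  have key : ∀ I₁ I₂ : ZFSet,
      (∀ p ∈ I₁, ∃ a b, p = opair a b) →
      (∀ a b b', opair a b ∈ I₁ → opair a b' ∈ I₁ → b = b') →
      (∀ p ∈ I₂, ∃ a b, p = opair a b) →
      (∀ a b b', opair a b ∈ I₂ → opair a b' ∈ I₂ → b = b') →
      (∀ z, (z ∈ s ↔ γsem z U I₁)) → (∀ z, (z ∈ s ↔ γsem z U I₂)) →
      I₁ ⊆ I₂ := by
    intro I₁ I₂ hp1 hf1 hp2 hf2 hc1 hc2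
    intro p hpI
    obtain ⟨a, b, hpab⟩ := hp1 p hpI
    -- the domain tag
    have hdom : opair (natZ 2) a ∈ s := (hc1 _).mpr (Or.inr (Or.inr ⟨p, hpI, a, b, hpab, rfl⟩))
    rcases (hc2 _).mp hdom with ⟨a', ha', heq⟩ | ⟨q, hq, a', b', hqab, u, hu, heq⟩ |
      ⟨q, hq, a', b', hqab, heq⟩
    · exact absurd (opair_inj heq).1 natZ_ne_02.symm
    · exact absurd (opair_inj heq).1 natZ_ne_12.symm
    · -- q = opair a' b' ∈ I₂ with a' = a
      have haa : a' = a := ((opair_inj heq).2).symm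
      rw [haa] at hqab
      have hqI : opair a b' ∈ I₂ := hqab ▸ hq
      -- show b = b'
      have hbb : b = b' := by
        ext u
        constructor
        · intro hu
          have hz : opair (natZ 1) (opair a u) ∈ s :=
            (hc1 _).mpr (Or.inr (Or.inl ⟨p, hpI, a, b, hpab, u, hu, rfl⟩))
          rcases (hc2 _).mp hz with ⟨a2, ha2, heq2⟩ | ⟨q2, hq2, a2, b2, hq2ab, u2, hu2, heq2⟩ |
            ⟨q2, hq2, a2, b2, hq2ab, heq2⟩
          · exact absurd (opair_inj heq2).1 natZ_ne_01.symm
          · obtain ⟨e2a, e2b⟩ := opair_inj (opair_inj heq2).2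
            subst e2a; subst e2b
            have hm : opair a b2 ∈ I₂ := hq2ab ▸ hq2
            rw [hf2 a b2 b' hm hqI] at hu2
            exact hu2
          · exact absurd (opair_inj heq2).1 natZ_ne_12
        · intro hu
          have hz : opair (natZ 1) (opair a u) ∈ s :=
            (hc2 _).mpr (Or.inr (Or.inl ⟨opair a b', hqI, a, b', rfl, u, hu, rfl⟩))
          rcases (hc1 _).mp hz with ⟨a2, ha2, heq2⟩ | ⟨q2, hq2, a2, b2, hq2ab, u2, hu2, heq2⟩ |
            ⟨q2, hq2, a2, b2, hq2ab, heq2⟩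
          · exact absurd (opair_inj heq2).1 natZ_ne_01.symm
          · obtain ⟨e2a, e2b⟩ := opair_inj (opair_inj heq2).2
            subst e2a; subst e2b
            have hm : opair a b2 ∈ I₁ := hq2ab ▸ hq2
            rw [hf1 a b2 b hm (hpab ▸ hpI)] at hu2
            exact hu2
          · exact absurd (opair_inj heq2).1 natZ_ne_12
      rw [hpab, hbb]
      exact hqI
  have hII : I = I' := by
    have h12 := key I I' hIp hIf hIp' hIf' hd hd'
    have h21 := key I' I hIp' hIf' hIp hIf hd' hd
    exact ZFSet.ext fun z => ⟨fun hz => h12 hz, fun hz => h21 hz⟩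
  rw [hM, hM', hII]

/-- the diagram is included in the language fragment. -/
lemma psem_sub_Lset {t M s : ZFSet} (h : ψsem t M s) : s ⊆ Lset t := by
  obtain ⟨U, I, hM, hIp, hIf, hUb, hIb, hd⟩ := h
  intro z hz
  rw [mem_Lset]
  rcases (hd z).mp hz with ⟨a, ha, rfl⟩ | ⟨p, hp, a, b, hpab, u, hu, rfl⟩ |
    ⟨p, hp, a, b, hpab, rfl⟩
  · exact Or.inl ⟨a, hUb a ha, rfl⟩
  · obtain ⟨hβa, hβu⟩ := hIb p hp a b hpab
    exact Or.inr (Or.inl ⟨a, u, hβa, hβu u hu, rfl⟩)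
  · exact Or.inr (Or.inr ⟨a, (hIb p hp a b hpab).1, rfl⟩)

end Aux9
end SmallExt

namespace SmallExt
section Aux10

lemma satU_phi (t L : ZFSet) : SatU φF (vtwo t L) ↔ φsem t L := by
  rw [SatU_eq_SatD]
  have h := sat_φF (D := fun _ => True) goodDomTrue (v := vtwo t L) (fun _ => trivial)
  simpa [vtwo] using h

lemma satU_psi (t M s : ZFSet) : SatU ψF (vthree t M s) ↔ ψsem t M s := by
  rw [SatU_eq_SatD]
  have h := sat_ψF (D := fun _ => True) goodDomTrue (v := vthree t M s) (fun _ => trivial)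
  simpa [vthree] using h

lemma satV_phi {W : ZFSet} (hW : IsTransModel W) {t L : ZFSet} (ht : t ∈ W) (hL : L ∈ W) :
    SatV W φF (vtwo t L) ↔ φsem t L := by
  rw [SatV_eq_SatD]
  have hv : VOK (· ∈ W) (vtwo t L) := by
    intro n
    rcases n with _ | n
    · simpa [vtwo] using ht
    · rcases n with _ | n
      · simpa [vtwo] using hL
      · simpa [vtwo] using transModel_empty hW
  have h := sat_φF (transModel_goodDom hW) hv
  simpa [vtwo] using h

lemma satV_psi {W : ZFSet} (hW : IsTransModel W) {t M s : ZFSet}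
    (ht : t ∈ W) (hM : M ∈ W) (hs : s ∈ W) :
    SatV W ψF (vthree t M s) ↔ ψsem t M s := by
  rw [SatV_eq_SatD]
  have hv : VOK (· ∈ W) (vthree t M s) := by
    intro n
    rcases n with _ | n
    · simpa [vthree] using ht
    · rcases n with _ | n
      · simpa [vthree] using hM
      · rcases n with _ | n
        · simpa [vthree] using hs
        · simpa [vthree] using transModel_empty hW
  have h := sat_ψF (transModel_goodDom hW) hv
  simpa [vthree] using h

end Aux10
end SmallExt

open SmallExt in
theorem tci_diagram_formulas' :
    ∃ φ ψ : Fm, Fm.memOnly φ ∧ Fm.memOnly ψ ∧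
      Fm.paramSet φ = ∅ ∧ Fm.paramSet ψ = ∅ ∧
      Fm.free φ ⊆ {0, 1} ∧ Fm.free ψ ⊆ {0, 1, 2} ∧
      (∀ t, IsTCI t → ∃! L, SatU φ (vtwo t L)) ∧
      (∀ t M, IsTCI t → ModelsTCI M t → ∃! s, SatU ψ (vthree t M s)) ∧
      (∀ W, IsTransModel W → ∀ a b, a ∈ W → b ∈ W →
        (SatV W φ (vtwo a b) ↔ SatU φ (vtwo a b))) ∧
      (∀ W, IsTransModel W → ∀ a b c, a ∈ W → b ∈ W → c ∈ W →
        (SatV W ψ (vthree a b c) ↔ SatU ψ (vthree a b c))) ∧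
      (∀ t, IsTCI t → ∀ M M' s, SatU ψ (vthree t M s) → SatU ψ (vthree t M' s) → M = M') ∧
      (∀ t M s, SatU ψ (vthree t M s) → ∃ L, SatU φ (vtwo t L) ∧ s ⊆ L) := by
  refine ⟨φF, ψF, mo_φF, mo_ψF, ps_φF, ps_ψF, free_φF, free_ψF, ?_, ?_, ?_, ?_, ?_, ?_⟩
  · intro t _
    exact ⟨Lset t, (satU_phi t _).mpr (phisem_Lset t),
      fun L' h' => phisem_unique ((satU_phi t L').mp h') (phisem_Lset t)⟩
  · intro t M ht hM
    exact ⟨Sset (zfst M) (zsnd M), (satU_psi t M _).mpr (models_psem ht hM),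
      fun s' h' => psem_unique ((satU_psi t M s').mp h') (models_psem ht hM)⟩
  · intro W hW a b ha hb
    rw [satV_phi hW ha hb, satU_phi]
  · intro W hW a b c ha hb hc
    rw [satV_psi hW ha hb hc, satU_psi]
  · intro t _ M M' s h h'
    exact psem_inj ((satU_psi t M s).mp h) ((satU_psi t M' s).mp h')
  · intro t M s h
    exact ⟨Lset t, (satU_phi t _).mpr (phisem_Lset t), psem_sub_Lset ((satU_psi t M s).mp h)⟩


open SmallExt in
/-- There are parameter-free formulas `φ`, `ψ` of the
language of set theory with two and three free variables respectively, such
that `φ` defines (the map `𝔗 ↦ 𝓛_𝔗`) a function on the class of TCIs, `ψ`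
defines (the map `(𝔗, M) ↦ Σ(𝔗, M)`) a function on the class of pairs
`(𝔗, M)` with `M ⊨* 𝔗`, both absolute for transitive models of ZFC, with
`R_𝔗 = {(M, x) : ψ(𝔗, M, x)}` one-one, and `ψ(𝔗, M, x)` implying `x ⊆ 𝓛`
for the `𝓛` with `φ(𝔗, 𝓛)`. -/
theorem tci_diagram_formulas :
    ∃ φ ψ : Fm, Fm.memOnly φ ∧ Fm.memOnly ψ ∧
      Fm.paramSet φ = ∅ ∧ Fm.paramSet ψ = ∅ ∧
      Fm.free φ ⊆ {0, 1} ∧ Fm.free ψ ⊆ {0, 1, 2} ∧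
      (∀ t, IsTCI t → ∃! L, SatU φ (vtwo t L)) ∧
      (∀ t M, IsTCI t → ModelsTCI M t → ∃! s, SatU ψ (vthree t M s)) ∧
      (∀ W, IsTransModel W → ∀ a b, a ∈ W → b ∈ W →
        (SatV W φ (vtwo a b) ↔ SatU φ (vtwo a b))) ∧
      (∀ W, IsTransModel W → ∀ a b c, a ∈ W → b ∈ W → c ∈ W →
        (SatV W ψ (vthree a b c) ↔ SatU ψ (vthree a b c))) ∧
      (∀ t, IsTCI t → ∀ M M' s, SatU ψ (vthree t M s) → SatU ψ (vthree t M' s) → M = M') ∧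
      (∀ t M s, SatU ψ (vthree t M s) → ∃ L, SatU φ (vtwo t L) ∧ s ⊆ L) := by
  refine ⟨φF, ψF, mo_φF, mo_ψF, ps_φF, ps_ψF, free_φF, free_ψF, ?_, ?_, ?_, ?_, ?_, ?_⟩
  · intro t _
    exact ⟨Lset t, (satU_phi t _).mpr (phisem_Lset t),
      fun L' h' => phisem_unique ((satU_phi t L').mp h') (phisem_Lset t)⟩
  · intro t M ht hM
    exact ⟨Sset (zfst M) (zsnd M), (satU_psi t M _).mpr (models_psem ht hM),
      fun s' h' => psem_unique ((satU_psi t M s').mp h') (models_psem ht hM)⟩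
  · intro W hW a b ha hb
    rw [satV_phi hW ha hb, satU_phi]
  · intro W hW a b c ha hb hc
    rw [satV_psi hW ha hb hc, satU_psi]
  · intro t _ M M' s h h'
    exact psem_inj ((satU_psi t M s).mp h) ((satU_psi t M' s).mp h')
  · intro t M s h
    exact ⟨Lset t, (satU_phi t _).mpr (phisem_Lset t), psem_sub_Lset ((satU_psi t M s).mp h)⟩
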